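/- arXiv:0704.1503 — 2 statements merged into one kernel-verified Lean document; each statement's English description precedes it below -/
import Mathlib

section
/- For every n ≥ 1 and 0 ≤ a ≤ n, the dual map of d_{a,n} composed with the pivotal map satisfies: for all v ∈ V_{n−a}^n, d_{a,n}^*(ev(τ_n · v)) = (−1)^{(n+1)a} d_{n−a,n}(v), where ev : V_{n−a}^n → (V_{n−a}^n)^{**} is the canonical evaluation map, τ_n = ∏_{j=1}^{n−1} K_j^{j(n−j)} acts on V_{n−a}^n, and d_{a,n}^* : (V_{n−a}^n)^{**} → (V_a^n)^* is the transpose of d_{a,n}. -/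
noncomputable section

open scoped TensorProduct

set_option maxHeartbeats 1000000
set_option synthInstance.maxHeartbeats 400000

/-- The ground field `𝔸 = ℚ(q)`. -/
abbrev A : Type := RatFunc ℚ

/-- The element `q ∈ 𝔸`. -/
def qq : A := RatFunc.X

/-- The set of `a`-element subsets of `{0, 1, …, n-1}` (a model for the
`a`-element subsets of `{1, …, n}`), the basis of `V_a^n`. -/
abbrev BS (n a : ℕ) : Type := {s : Finset ℕ // s ⊆ Finset.range n ∧ s.card = a}

instance BS.fintype (n a : ℕ) : Fintype (BS n a) :=
  Fintype.subtype ((Finset.range n).powerset.filter fun s => s.card = a) (by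
    intro s
    simp [Finset.mem_powerset, Finset.mem_filter])

/-- The fundamental representation `V_a^n`, as the `𝔸`-vector space with basis the
`a`-element subsets of an `n`-element set. -/
abbrev V (n a : ℕ) : Type := BS n a → A

/-- `i₋₁ : V_{a-1}^{n-1} → V_a^n` (here with indices shifted:
`iminus n a : V_a^n → V_{a+1}^{n+1}`), the inclusion of the summand of subsets containing
the new top element `n`. -/
def iminus (n a : ℕ) : V n a →ₗ[A] V (n+1) (a+1) where
  toFun f s := if h : n ∈ s.1 then
      f ⟨s.1.erase n, by
        constructor
        · intro x hx
          have hx' := Finset.mem_erase.mp hx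
          have hx2 := s.2.1 hx'.2
          simp only [Finset.mem_range] at hx2 ⊢
          omega
        · rw [Finset.card_erase_of_mem h, s.2.2]; omega⟩
    else 0
  map_add' f g := by
    funext s
    simp only [Pi.add_apply]
    by_cases h : n ∈ s.1 <;> simp [h]
  map_smul' c f := by
    funext s
    simp only [Pi.smul_apply, smul_eq_mul, RingHom.id_apply]
    by_cases h : n ∈ s.1 <;> simp [h]

/-- `i₀ : V_a^{n-1} → V_a^n` (as `izero n a : V_a^n → V_a^{n+1}`), the inclusion of the
summand of subsets not containing the new top element. -/
def izero (n a : ℕ) : V n a →ₗ[A] V (n+1) a where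
  toFun f s := if h : n ∈ s.1 then 0 else
      f ⟨s.1, by
        refine ⟨fun x hx => ?_, s.2.2⟩
        have hx2 := s.2.1 hx
        simp only [Finset.mem_range] at hx2 ⊢
        rcases Nat.lt_succ_iff_lt_or_eq.mp hx2 with h' | h'
        · exact h'
        · exact absurd (h' ▸ hx) h⟩
  map_add' f g := by
    funext s
    simp only [Pi.add_apply]
    by_cases h : n ∈ s.1 <;> simp [h]
  map_smul' c f := by
    funext s
    simp only [Pi.smul_apply, smul_eq_mul, RingHom.id_apply]
    by_cases h : n ∈ s.1 <;> simp [h]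

/-- `p₋₁ : V_a^n → V_{a-1}^{n-1}` (as `pminus n a : V_{a+1}^{n+1} → V_a^n`), the projection
onto the summand of subsets containing the top element. -/
def pminus (n a : ℕ) : V (n+1) (a+1) →ₗ[A] V n a where
  toFun f t := f ⟨insert n t.1, by
    have hn : n ∉ t.1 := fun h => by
      have := t.2.1 h; simp [Finset.mem_range] at this
    constructor
    · intro x hx
      rcases Finset.mem_insert.mp hx with rfl | hx
      · simp
      · have := t.2.1 hx; simp only [Finset.mem_range] at this ⊢; omega
    · rw [Finset.card_insert_of_notMem hn, t.2.2]⟩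
  map_add' f g := rfl
  map_smul' c f := rfl

/-- `p₀ : V_a^n → V_a^{n-1}` (as `pzero n a : V_a^{n+1} → V_a^n`), the projection onto the
summand of subsets not containing the top element. -/
def pzero (n a : ℕ) : V (n+1) a →ₗ[A] V n a where
  toFun f t := f ⟨t.1, by
    refine ⟨fun x hx => ?_, t.2.2⟩
    have := t.2.1 hx; simp only [Finset.mem_range] at this ⊢; omega⟩
  map_add' f g := rfl
  map_smul' c f := rfl

/-- The diagonal operator on `V_a^n` acting by the scalar `x` on basis subsets containing `m`
and by `y` on those not containing `m`; for `m = n-1` this is `x • i₋₁ p₋₁ + y • i₀ p₀`. -/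
def diagOp (n a m : ℕ) (x y : A) : Module.End A (V n a) where
  toFun f s := (if m ∈ s.1 then x else y) * f s
  map_add' f g := by
    funext s
    simp only [Pi.add_apply]
    ring
  map_smul' c f := by
    funext s
    simp only [Pi.smul_apply, smul_eq_mul, RingHom.id_apply]
    ring

/-- The recursively defined action of the generator `X_i^+` on `V_a^n`
(`XpOp n a i`, where `i` is the literal subscript, `1 ≤ i ≤ n-1`). -/
def XpOp : (n a i : ℕ) → Module.End A (V n a)
  | 0, _, _ => 0
  | 1, _, _ => 0
  | _+2, 0, _ => 0
  | n+2, a+1, i =>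
    if a + 1 = n + 2 then 0
    else if i = n + 1 then
      (iminus (n+1) a) ∘ₗ (izero n a) ∘ₗ (pminus n a) ∘ₗ (pzero (n+1) (a+1))
    else
      (iminus (n+1) a) ∘ₗ (XpOp (n+1) a i) ∘ₗ (pminus (n+1) a)
      + (izero (n+1) (a+1)) ∘ₗ (XpOp (n+1) (a+1) i) ∘ₗ (pzero (n+1) (a+1))

/-- The recursively defined action of the generator `X_i^-` on `V_a^n`. -/
def XmOp : (n a i : ℕ) → Module.End A (V n a)
  | 0, _, _ => 0
  | 1, _, _ => 0
  | _+2, 0, _ => 0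
  | n+2, a+1, i =>
    if a + 1 = n + 2 then 0
    else if i = n + 1 then
      (izero (n+1) (a+1)) ∘ₗ (iminus n a) ∘ₗ (pzero n a) ∘ₗ (pminus (n+1) a)
    else
      (iminus (n+1) a) ∘ₗ (XmOp (n+1) a i) ∘ₗ (pminus (n+1) a)
      + (izero (n+1) (a+1)) ∘ₗ (XmOp (n+1) (a+1) i) ∘ₗ (pzero (n+1) (a+1))

/-- The recursively defined action of the generator `K_i` on `V_a^n`.  The middle factors
`diagOp … 1 q` and `diagOp … q⁻¹ 1` are the operators `i₋₁ p₋₁ + q i₀ p₀` and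
`q⁻¹ i₋₁ p₋₁ + i₀ p₀` of the recursion. -/
def KOp : (n a i : ℕ) → Module.End A (V n a)
  | 0, _, _ => 1
  | 1, _, _ => 1
  | _+2, 0, _ => 1
  | n+2, a+1, i =>
    if a + 1 = n + 2 then 1
    else if i = n + 1 then
      (iminus (n+1) a) ∘ₗ (diagOp (n+1) a n 1 qq) ∘ₗ (pminus (n+1) a)
      + (izero (n+1) (a+1)) ∘ₗ (diagOp (n+1) (a+1) n qq⁻¹ 1) ∘ₗ (pzero (n+1) (a+1))
    else
      (iminus (n+1) a) ∘ₗ (KOp (n+1) a i) ∘ₗ (pminus (n+1) a)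
      + (izero (n+1) (a+1)) ∘ₗ (KOp (n+1) (a+1) i) ∘ₗ (pzero (n+1) (a+1))

/-- The recursively defined action of `K_i⁻¹` on `V_a^n` (the inverse of `KOp`),
given by the same recursion with `q` and `q⁻¹` interchanged. -/
def KinvOp : (n a i : ℕ) → Module.End A (V n a)
  | 0, _, _ => 1
  | 1, _, _ => 1
  | _+2, 0, _ => 1
  | n+2, a+1, i =>
    if a + 1 = n + 2 then 1
    else if i = n + 1 then
      (iminus (n+1) a) ∘ₗ (diagOp (n+1) a n 1 qq⁻¹) ∘ₗ (pminus (n+1) a)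
      + (izero (n+1) (a+1)) ∘ₗ (diagOp (n+1) (a+1) n qq 1) ∘ₗ (pzero (n+1) (a+1))
    else
      (iminus (n+1) a) ∘ₗ (KinvOp (n+1) a i) ∘ₗ (pminus (n+1) a)
      + (izero (n+1) (a+1)) ∘ₗ (KinvOp (n+1) (a+1) i) ∘ₗ (pzero (n+1) (a+1))
/-! ### The quantum group `U_q(sl_n)` by generators and relations.

We present the algebra with `m = n - 1` generators of each kind `K i, K i⁻¹, X i⁺, X i⁻`,
indexed by `i : Fin m` (so `i` corresponds to the subscript `i + 1 ∈ {1, …, n-1}`). -/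

/-- Generators of `U_q(sl_n)` (with `m = n-1`). -/
inductive UqGen (m : ℕ) : Type
  | K : Fin m → UqGen m
  | Kinv : Fin m → UqGen m
  | Xp : Fin m → UqGen m
  | Xm : Fin m → UqGen m

/-- The free `𝔸`-algebra on the generators. -/
abbrev FA (m : ℕ) : Type := FreeAlgebra A (UqGen m)

namespace FA
variable {m : ℕ}
def K (i : Fin m) : FA m := FreeAlgebra.ι A (UqGen.K i)
def Kinv (i : Fin m) : FA m := FreeAlgebra.ι A (UqGen.Kinv i)
def Xp (i : Fin m) : FA m := FreeAlgebra.ι A (UqGen.Xp i)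
def Xm (i : Fin m) : FA m := FreeAlgebra.ι A (UqGen.Xm i)
end FA

/-- The Cartan integers `(i,j)` of type `A_m`: `2` if `i = j`, `-1` if `|i-j| = 1`,
`0` if `|i-j| ≥ 2`. -/
def cart {m : ℕ} (i j : Fin m) : ℤ :=
  if i = j then 2 else if (i : ℕ) + 1 = j ∨ (j : ℕ) + 1 = i then -1 else 0

/-- The defining relations of `U_q(sl_n)`. -/
inductive uqRel (m : ℕ) : FA m → FA m → Prop
  | KKinv (i : Fin m) : uqRel m (FA.K i * FA.Kinv i) 1
  | KinvK (i : Fin m) : uqRel m (FA.Kinv i * FA.K i) 1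
  | KK (i j : Fin m) : uqRel m (FA.K i * FA.K j) (FA.K j * FA.K i)
  | KXp (i j : Fin m) : uqRel m (FA.K i * FA.Xp j) (qq ^ (cart i j) • (FA.Xp j * FA.K i))
  | KXm (i j : Fin m) : uqRel m (FA.K i * FA.Xm j) (qq ^ (-cart i j) • (FA.Xm j * FA.K i))
  | XpXm (i j : Fin m) :
      uqRel m (FA.Xp i * FA.Xm j - FA.Xm j * FA.Xp i)
        (if i = j then (qq - qq⁻¹)⁻¹ • (FA.K i - FA.Kinv i) else 0)
  | XpXp (i j : Fin m) (h : (i : ℕ) + 2 ≤ j ∨ (j : ℕ) + 2 ≤ i) :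
      uqRel m (FA.Xp i * FA.Xp j) (FA.Xp j * FA.Xp i)
  | XmXm (i j : Fin m) (h : (i : ℕ) + 2 ≤ j ∨ (j : ℕ) + 2 ≤ i) :
      uqRel m (FA.Xm i * FA.Xm j) (FA.Xm j * FA.Xm i)
  | serreP (i j : Fin m) (h : (i : ℕ) + 1 = j ∨ (j : ℕ) + 1 = i) :
      uqRel m (FA.Xp i ^ 2 * FA.Xp j - (qq + qq⁻¹) • (FA.Xp i * FA.Xp j * FA.Xp i)
        + FA.Xp j * FA.Xp i ^ 2) 0
  | serreM (i j : Fin m) (h : (i : ℕ) + 1 = j ∨ (j : ℕ) + 1 = i) :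
      uqRel m (FA.Xm i ^ 2 * FA.Xm j - (qq + qq⁻¹) • (FA.Xm i * FA.Xm j * FA.Xm i)
        + FA.Xm j * FA.Xm i ^ 2) 0

/-- The quantum group `U_q(sl_{m+1})`, presented by generators and relations.
For `U_q(sl_n)` take `m = n - 1`. -/
abbrev Uq (m : ℕ) : Type := RingQuot (uqRel m)

namespace Uq
variable {m : ℕ}
/-- The generator `K_{i+1}` of `U_q(sl_n)`. -/
def K (i : Fin m) : Uq m := RingQuot.mkAlgHom A (uqRel m) (FA.K i)
/-- The generator `K_{i+1}⁻¹` of `U_q(sl_n)`. -/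
def Kinv (i : Fin m) : Uq m := RingQuot.mkAlgHom A (uqRel m) (FA.Kinv i)
/-- The generator `X_{i+1}^+` of `U_q(sl_n)`. -/
def Xp (i : Fin m) : Uq m := RingQuot.mkAlgHom A (uqRel m) (FA.Xp i)
/-- The generator `X_{i+1}^-` of `U_q(sl_n)`. -/
def Xm (i : Fin m) : Uq m := RingQuot.mkAlgHom A (uqRel m) (FA.Xm i)
end Uq
/-! ### The duality maps `d_{a,n}`, triple invariants, and the pivotal elements `τ`. -/

/-- The sum-of-coefficients functional on `V_a^n`. -/
def sumF (n a : ℕ) : V n a →ₗ[A] A where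
  toFun f := ∑ s : BS n a, f s
  map_add' f g := by simp [Finset.sum_add_distrib]
  map_smul' c f := by simp [Finset.mul_sum]

/-- The "trivial" map `V_a^n → (V_c^n)^*`; when `V_a^n` and `V_c^n` are one-dimensional
(`a = 0` or `a = n`, and correspondingly for `c`) it sends the basis vector to the dual
basis vector.  Used for the base cases of `d_{a,n}`. -/
def dtriv (n a c : ℕ) : V n a →ₗ[A] Module.Dual A (V n c) :=
  LinearMap.smulRight (sumF n a) (sumF n c)

/-- The map `d_{a,n} : V_a^n → (V_{n-a}^n)^*`, defined recursively by
`d_{a,n} = i₀ ∘ d_{a-1,n-1} ∘ p₋₁ + (-q)^{-a} i₋₁ ∘ d_{a,n-1} ∘ p₀`, with both base cases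
sending the basis vector to the dual basis vector.  Here `dmap n a c` has target
`(V_c^n)^*`, to be used with `c = n - a`. -/
def dmap : (n a c : ℕ) → (V n a →ₗ[A] Module.Dual A (V n c))
  | 0, a, c => dtriv 0 a c
  | n+1, 0, c => dtriv (n+1) 0 c
  | n+1, a+1, c =>
    if a + 1 = n + 1 then dtriv (n+1) (a+1) c
    else
      match c with
      | 0 => 0
      | c+1 =>
        (pzero n (c+1)).dualMap ∘ₗ (dmap n a (c+1)) ∘ₗ (pminus n a)
        + ((-qq) ^ (a+1))⁻¹ •
            ((pminus n c).dualMap ∘ₗ (dmap n (a+1) c) ∘ₗ (pzero n (a+1)))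

section voutvin

open TensorProduct

/-- First term of the recursion for `v_out`: `(-1)^c q^{b+c} (i₋₁ ⊗ i₀ ⊗ i₀)`. -/
def vterm1 (n a b c : ℕ) (v : V n a ⊗[A] (V n b ⊗[A] V n c)) :
    V (n+1) (a+1) ⊗[A] (V (n+1) b ⊗[A] V (n+1) c) :=
  ((-1 : A)^c * qq^(b+c)) •
    (TensorProduct.map (iminus n a) (TensorProduct.map (izero n b) (izero n c)) v)

/-- Second term of the recursion for `v_out`: `(-1)^a q^c (i₀ ⊗ i₋₁ ⊗ i₀)`. -/
def vterm2 (n a b c : ℕ) (v : V n a ⊗[A] (V n b ⊗[A] V n c)) :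
    V (n+1) a ⊗[A] (V (n+1) (b+1) ⊗[A] V (n+1) c) :=
  ((-1 : A)^a * qq^c) •
    (TensorProduct.map (izero n a) (TensorProduct.map (iminus n b) (izero n c)) v)

/-- Third term of the recursion for `v_out`: `(-1)^b (i₀ ⊗ i₀ ⊗ i₋₁)`. -/
def vterm3 (n a b c : ℕ) (v : V n a ⊗[A] (V n b ⊗[A] V n c)) :
    V (n+1) a ⊗[A] (V (n+1) b ⊗[A] V (n+1) (c+1)) :=
  ((-1 : A)^b) •
    (TensorProduct.map (izero n a) (TensorProduct.map (izero n b) (iminus n c)) v)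

/-- The triple invariant `v_out^n_{a,b,c} ∈ V_a^n ⊗ V_b^n ⊗ V_c^n` (intended for
`a + b + c = n`), defined by the recursion of Definition `defn:trivalent-vertices`,
omitting any term with a negative subscript. -/
def voutE : (n a b c : ℕ) → V n a ⊗[A] (V n b ⊗[A] V n c)
  | 0, _, _, _ => (fun _ => (1:A)) ⊗ₜ[A] ((fun _ => (1:A)) ⊗ₜ[A] (fun _ => (1:A)))
  | n+1, 0, 0, 0 => 0
  | n+1, a+1, 0, 0 => vterm1 n a 0 0 (voutE n a 0 0)
  | n+1, 0, b+1, 0 => vterm2 n 0 b 0 (voutE n 0 b 0)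
  | n+1, 0, 0, c+1 => vterm3 n 0 0 c (voutE n 0 0 c)
  | n+1, a+1, b+1, 0 =>
      vterm1 n a (b+1) 0 (voutE n a (b+1) 0) + vterm2 n (a+1) b 0 (voutE n (a+1) b 0)
  | n+1, a+1, 0, c+1 =>
      vterm1 n a 0 (c+1) (voutE n a 0 (c+1)) + vterm3 n (a+1) 0 c (voutE n (a+1) 0 c)
  | n+1, 0, b+1, c+1 =>
      vterm2 n 0 b (c+1) (voutE n 0 b (c+1)) + vterm3 n 0 (b+1) c (voutE n 0 (b+1) c)
  | n+1, a+1, b+1, c+1 =>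
      vterm1 n a (b+1) (c+1) (voutE n a (b+1) (c+1))
      + vterm2 n (a+1) b (c+1) (voutE n (a+1) b (c+1))
      + vterm3 n (a+1) (b+1) c (voutE n (a+1) (b+1) c)

/-- First term of the recursion for `v_in`: `(-1)^c (…) ∘ (p₋₁ ⊗ p₀ ⊗ p₀)`. -/
def wterm1 (n a b c : ℕ) (φ : V n a ⊗[A] (V n b ⊗[A] V n c) →ₗ[A] A) :
    V (n+1) (a+1) ⊗[A] (V (n+1) b ⊗[A] V (n+1) c) →ₗ[A] A :=
  ((-1 : A)^c) •
    (φ ∘ₗ TensorProduct.map (pminus n a) (TensorProduct.map (pzero n b) (pzero n c)))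

/-- Second term of the recursion for `v_in`: `(-1)^a q^{-a} (…) ∘ (p₀ ⊗ p₋₁ ⊗ p₀)`. -/
def wterm2 (n a b c : ℕ) (φ : V n a ⊗[A] (V n b ⊗[A] V n c) →ₗ[A] A) :
    V (n+1) a ⊗[A] (V (n+1) (b+1) ⊗[A] V (n+1) c) →ₗ[A] A :=
  ((-1 : A)^a * (qq^a)⁻¹) •
    (φ ∘ₗ TensorProduct.map (pzero n a) (TensorProduct.map (pminus n b) (pzero n c)))

/-- Third term of the recursion for `v_in`: `(-1)^b q^{-a-b} (…) ∘ (p₀ ⊗ p₀ ⊗ p₋₁)`. -/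
def wterm3 (n a b c : ℕ) (φ : V n a ⊗[A] (V n b ⊗[A] V n c) →ₗ[A] A) :
    V (n+1) a ⊗[A] (V (n+1) b ⊗[A] V (n+1) (c+1)) →ₗ[A] A :=
  ((-1 : A)^b * (qq^(a+b))⁻¹) •
    (φ ∘ₗ TensorProduct.map (pzero n a) (TensorProduct.map (pzero n b) (pminus n c)))

/-- The triple coinvariant `v_in^n_{a,b,c} : V_a^n ⊗ V_b^n ⊗ V_c^n → 𝔸` (intended for
`a + b + c = n`), defined recursively, omitting any term with a negative subscript. -/
def vinE : (n a b c : ℕ) → (V n a ⊗[A] (V n b ⊗[A] V n c) →ₗ[A] A)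
  | 0, a, b, c =>
      (LinearMap.mul' A A) ∘ₗ
        TensorProduct.map (sumF 0 a)
          ((LinearMap.mul' A A) ∘ₗ TensorProduct.map (sumF 0 b) (sumF 0 c))
  | n+1, 0, 0, 0 => 0
  | n+1, a+1, 0, 0 => wterm1 n a 0 0 (vinE n a 0 0)
  | n+1, 0, b+1, 0 => wterm2 n 0 b 0 (vinE n 0 b 0)
  | n+1, 0, 0, c+1 => wterm3 n 0 0 c (vinE n 0 0 c)
  | n+1, a+1, b+1, 0 =>
      wterm1 n a (b+1) 0 (vinE n a (b+1) 0) + wterm2 n (a+1) b 0 (vinE n (a+1) b 0)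
  | n+1, a+1, 0, c+1 =>
      wterm1 n a 0 (c+1) (vinE n a 0 (c+1)) + wterm3 n (a+1) 0 c (vinE n (a+1) 0 c)
  | n+1, 0, b+1, c+1 =>
      wterm2 n 0 b (c+1) (vinE n 0 b (c+1)) + wterm3 n 0 (b+1) c (vinE n 0 (b+1) c)
  | n+1, a+1, b+1, c+1 =>
      wterm1 n a (b+1) (c+1) (vinE n a (b+1) (c+1))
      + wterm2 n (a+1) b (c+1) (vinE n (a+1) b (c+1))
      + wterm3 n (a+1) (b+1) c (vinE n (a+1) (b+1) c)

end voutvin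

/-- The operator `∏_{j=1}^{n-1} K_j^j` on `V_a^n`. -/
def kjOp (n a : ℕ) : Module.End A (V n a) :=
  (List.ofFn fun i : Fin (n-1) => (KOp n a ((i : ℕ)+1)) ^ ((i : ℕ)+1)).prod

/-- The pivotal operator `τ_n = ∏_{j=1}^{n-1} K_j^{j(n-j)}` on `V_a^n`. -/
def tauOp (n a : ℕ) : Module.End A (V n a) :=
  (List.ofFn fun i : Fin (n-1) => (KOp n a ((i : ℕ)+1)) ^ (((i : ℕ)+1) * (n - ((i : ℕ)+1)))).prod

/-- The inverse pivotal operator `τ_n⁻¹ = ∏_{j=1}^{n-1} K_j^{-j(n-j)}` on `V_a^n`. -/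
def tauinvOp (n a : ℕ) : Module.End A (V n a) :=
  (List.ofFn fun i : Fin (n-1) => (KinvOp n a ((i : ℕ)+1)) ^ (((i : ℕ)+1) * (n - ((i : ℕ)+1)))).prod

/-- The element `τ_n = ∏_{j=1}^{n-1} K_j^{j(n-j)} ∈ U_q(sl_n)`. -/
def tauU (n : ℕ) : Uq (n-1) :=
  (List.ofFn fun i : Fin (n-1) => (Uq.K i) ^ (((i : ℕ)+1) * (n - ((i : ℕ)+1)))).prod

/-- The Cartan integers for literal subscripts `i, j ∈ {1, …, n-1}`. -/
def cartN (i j : ℕ) : ℤ :=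
  if i = j then 2 else if i + 1 = j ∨ j + 1 = i then -1 else 0

/-! ### Auxiliary machinery for the proof of statement 11 -/

lemma qq_ne_zero : qq ≠ 0 := RatFunc.X_ne_zero

namespace St11

open Finset

lemma congr_fun_BS {n a : ℕ} (f : V n a) {s t : BS n a} (h : s.1 = t.1) : f s = f t :=
  congrArg f (Subtype.ext h)

lemma sdiff_insert_top (n : ℕ) (t : Finset ℕ) : range (n+1) \ insert n t = range n \ t := by
  ext j
  simp only [mem_sdiff, mem_range, mem_insert, not_or]
  constructor
  · rintro ⟨h1, h2, h3⟩; exact ⟨by omega, h3⟩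
  · rintro ⟨h1, h3⟩; exact ⟨by omega, by omega, h3⟩

lemma sdiff_top_notmem (n : ℕ) (t : Finset ℕ) (hnt : n ∉ t) :
    range (n+1) \ t = insert n (range n \ t) := by
  ext j
  simp only [mem_sdiff, mem_range, mem_insert]
  constructor
  · rintro ⟨h1, h2⟩
    rcases Nat.lt_succ_iff_lt_or_eq.mp h1 with h | h
    · exact Or.inr ⟨h, h2⟩
    · exact Or.inl h
  · rintro (rfl | ⟨h1, h2⟩)
    · exact ⟨by omega, hnt⟩
    · exact ⟨by omega, h2⟩

/-- The inversion count of a subset of `range n`. -/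
def invD (n : ℕ) (T : Finset ℕ) : ℕ := ∑ j ∈ (range n) \ T, (T ∩ range j).card

lemma invD_empty (n : ℕ) : invD n ∅ = 0 := by simp [invD]

lemma invD_full (n : ℕ) : invD n (range n) = 0 := by simp [invD]

lemma invD_insert (n : ℕ) (t : Finset ℕ) (ht : t ⊆ range n) :
    invD (n+1) (insert n t) = invD n t := by
  unfold invD
  rw [sdiff_insert_top]
  refine Finset.sum_congr rfl (fun j hj => ?_)
  have hn : n ∉ range j := by
    simp only [mem_sdiff, mem_range] at hj
    simp only [mem_range]; omega
  rw [Finset.insert_inter_of_notMem hn]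

lemma invD_notmem (n : ℕ) (t : Finset ℕ) (ht : t ⊆ range n) (hnt : n ∉ t) :
    invD (n+1) t = t.card + invD n t := by
  unfold invD
  rw [sdiff_top_notmem n t hnt, Finset.sum_insert (by simp),
    Finset.inter_eq_left.mpr ht]

/-- Sum over the (unique) empty subset. -/
lemma sum_BS_zero {n : ℕ} {M : Type*} [AddCommMonoid M] (F : BS n 0 → M) :
    ∑ x : BS n 0, F x = F ⟨∅, by simp⟩ := by
  haveI : Subsingleton (BS n 0) :=
    ⟨fun a b => Subtype.ext (by rw [Finset.card_eq_zero.mp a.2.2, Finset.card_eq_zero.mp b.2.2])⟩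
  exact Fintype.sum_subsingleton _ _

lemma BS_full_val {n : ℕ} (x : BS n n) : x.1 = range n :=
  Finset.eq_of_subset_of_card_le x.2.1 (by rw [Finset.card_range, x.2.2])

/-- Sum over the (unique) full subset. -/
lemma sum_BS_full {n : ℕ} {M : Type*} [AddCommMonoid M] (F : BS n n → M) :
    ∑ x : BS n n, F x = F ⟨range n, by simp⟩ := by
  haveI : Subsingleton (BS n n) :=
    ⟨fun a b => Subtype.ext (by rw [BS_full_val a, BS_full_val b])⟩
  exact Fintype.sum_subsingleton _ _

/-- The splitting of basis subsets according to containing the top element or not. -/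
def bsSplit (n a : ℕ) : BS (n+1) (a+1) ≃ (BS n a) ⊕ (BS n (a+1)) where
  toFun S := if h : n ∈ S.1 then
      Sum.inl ⟨S.1.erase n, by
        constructor
        · intro x hx
          have hx' := Finset.mem_erase.mp hx
          have hx2 := S.2.1 hx'.2
          simp only [mem_range] at hx2 ⊢
          omega
        · rw [Finset.card_erase_of_mem h, S.2.2]; omega⟩
    else
      Sum.inr ⟨S.1, by
        refine ⟨fun x hx => ?_, S.2.2⟩
        have hx2 := S.2.1 hx
        simp only [mem_range] at hx2 ⊢
        rcases Nat.lt_succ_iff_lt_or_eq.mp hx2 with h' | h'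
        · exact h'
        · exact absurd (h' ▸ hx) h⟩
  invFun x := match x with
    | Sum.inl t => ⟨insert n t.1, by
        have hn : n ∉ t.1 := fun h => by simpa using t.2.1 h
        constructor
        · intro x hx
          rcases Finset.mem_insert.mp hx with rfl | hx
          · simp
          · have := t.2.1 hx; simp only [mem_range] at this ⊢; omega
        · rw [Finset.card_insert_of_notMem hn, t.2.2]⟩
    | Sum.inr t => ⟨t.1, ⟨fun x hx => by
        have := t.2.1 hx; simp only [mem_range] at this ⊢; omega, t.2.2⟩⟩
  left_inv S := by
    by_cases h : n ∈ S.1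
    · simp only [dif_pos h]
      exact Subtype.ext (Finset.insert_erase h)
    · simp only [dif_neg h]
  right_inv x := by
    rcases x with t | t
    · have hn : n ∉ t.1 := fun h => by simpa using t.2.1 h
      simp only [dif_pos (Finset.mem_insert_self n t.1)]
      exact congrArg Sum.inl (Subtype.ext (Finset.erase_insert hn))
    · have hn : n ∉ t.1 := fun h => by simpa using t.2.1 h
      simp only [dif_neg hn]

lemma dtriv_apply (n a c : ℕ) (f : V n a) (g : V n c) :
    dtriv n a c f g = (∑ T : BS n a, f T) * ∑ U : BS n c, g U := rfl

/-- The key evaluation formula for the duality maps `d_{a,n}`. -/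
lemma dmap_apply : ∀ (n a c : ℕ) (hn : a + c = n) (f : V n a) (g : V n c),
    dmap n a c f g = ∑ T : BS n a, ((-qq) ^ invD n T.1)⁻¹ *
      (f T * g ⟨range n \ T.1, ⟨Finset.sdiff_subset, by
        rw [Finset.card_sdiff_of_subset T.2.1, Finset.card_range, T.2.2]; omega⟩⟩) := by
  intro n
  induction n with
  | zero =>
    intro a c h f g
    obtain rfl : a = 0 := by omega
    obtain rfl : c = 0 := by omega
    rw [show dmap 0 0 0 = dtriv 0 0 0 from rfl, dtriv_apply,
      sum_BS_zero (fun T => f T), sum_BS_zero (fun U => g U), sum_BS_zero]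
    simp [invD]
  | succ n ih =>
    intro a c h f g
    rcases a with _ | a
    · obtain rfl : c = n + 1 := by omega
      rw [show dmap (n+1) 0 (n+1) = dtriv (n+1) 0 (n+1) from rfl, dtriv_apply,
        sum_BS_zero (fun T => f T), sum_BS_full (fun U => g U), sum_BS_zero]
      simp [invD]
    · by_cases hcase : a + 1 = n + 1
      · obtain rfl : c = 0 := by omega
        obtain rfl : a = n := by omega
        have hd : dmap (a+1) (a+1) 0 = dtriv (a+1) (a+1) 0 := by
          show (if a + 1 = a + 1 then dtriv (a+1) (a+1) 0 else 0) = _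
          rw [if_pos rfl]
        rw [hd, dtriv_apply, sum_BS_zero (fun U => g U), sum_BS_full (fun T => f T),
          sum_BS_full]
        simp [invD]
      · obtain ⟨c', rfl⟩ : ∃ c', c = c' + 1 := ⟨c - 1, by omega⟩
        have hrec : dmap (n+1) (a+1) (c'+1) f g
            = dmap n a (c'+1) (pminus n a f) (pzero n (c'+1) g)
              + ((-qq) ^ (a+1))⁻¹ *
                dmap n (a+1) c' (pzero n (a+1) f) (pminus n c' g) := by
          show (if a + 1 = n + 1 then dtriv (n+1) (a+1) (c'+1) else
            ((pzero n (c'+1)).dualMap ∘ₗ (dmap n a (c'+1)) ∘ₗ (pminus n a)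
            + ((-qq) ^ (a+1))⁻¹ •
                ((pminus n c').dualMap ∘ₗ (dmap n (a+1) c') ∘ₗ (pzero n (a+1))))) f g = _
          rw [if_neg hcase]
          rfl
        rw [hrec, ih a (c'+1) (by omega), ih (a+1) c' (by omega), Finset.mul_sum]
        rw [Fintype.sum_equiv (bsSplit n a)
          (fun T : BS (n+1) (a+1) => ((-qq) ^ invD (n+1) T.1)⁻¹ *
            (f T * g ⟨range (n+1) \ T.1, ⟨Finset.sdiff_subset, by
              rw [Finset.card_sdiff_of_subset T.2.1, Finset.card_range, T.2.2]; omega⟩⟩))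
          (fun x => ((-qq) ^ invD (n+1) ((bsSplit n a).symm x).1)⁻¹ *
            (f ((bsSplit n a).symm x) * g ⟨range (n+1) \ ((bsSplit n a).symm x).1,
              ⟨Finset.sdiff_subset, by
                rw [Finset.card_sdiff_of_subset ((bsSplit n a).symm x).2.1, Finset.card_range,
                  ((bsSplit n a).symm x).2.2]; omega⟩⟩))
          (fun T => by simp only [Equiv.symm_apply_apply]), Fintype.sum_sum_type]
        congr 1
        · refine Finset.sum_congr rfl (fun t _ => ?_)
          refine congrArg₂ (· * ·) ?_ (congrArg₂ (· * ·) ?_ ?_)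
          · exact congrArg (fun k => ((-qq:A)^k)⁻¹) (invD_insert n t.1 t.2.1).symm
          · exact congr_fun_BS f rfl
          · exact congr_fun_BS g (sdiff_insert_top n t.1).symm
        · refine Finset.sum_congr rfl (fun t _ => ?_)
          have hnt : n ∉ t.1 := fun hh => by simpa using t.2.1 hh
          rw [← mul_assoc]
          refine congrArg₂ (· * ·) ?_ (congrArg₂ (· * ·) ?_ ?_)
          · show ((-qq:A)^(a+1))⁻¹ * ((-qq)^invD n t.1)⁻¹ = ((-qq) ^ invD (n+1) t.1)⁻¹
            rw [invD_notmem n t.1 t.2.1 hnt, t.2.2]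
            ring
          · exact congr_fun_BS f rfl
          · exact congr_fun_BS g (sdiff_top_notmem n t.1 hnt).symm

/-- Pointwise multiplication operator. -/
def mulOp {n a : ℕ} (c : BS n a → A) : Module.End A (V n a) where
  toFun f S := c S * f S
  map_add' f g := by funext S; simp only [Pi.add_apply]; ring
  map_smul' r f := by
    funext S
    simp only [Pi.smul_apply, smul_eq_mul, RingHom.id_apply]
    ring

@[simp] lemma mulOp_apply {n a : ℕ} (c : BS n a → A) (f : V n a) (S : BS n a) :
    mulOp c f S = c S * f S := rfl

/-- `mulOp` as a monoid homomorphism. -/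
def mulOpHom (n a : ℕ) : (BS n a → A) →* Module.End A (V n a) where
  toFun := mulOp
  map_one' := by
    apply LinearMap.ext; intro f; funext S
    show (1 : BS n a → A) S * f S = f S
    simp
  map_mul' c d := by
    apply LinearMap.ext; intro f; funext S
    show (c S * d S) * f S = c S * (d S * f S)
    ring

/-- The diagonal coefficient of the generator `K_i`. -/
def kc (i : ℕ) (s : Finset ℕ) : A :=
  (if i ∈ s then qq else 1) * (if i - 1 ∈ s then qq⁻¹ else 1)

lemma kc_congr {i : ℕ} {s t : Finset ℕ} (h1 : i ∈ s ↔ i ∈ t) (h2 : i - 1 ∈ s ↔ i - 1 ∈ t) :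
    kc i s = kc i t := by
  unfold kc
  rw [if_congr h1 rfl rfl, if_congr h2 rfl rfl]

lemma KOp_eq (n : ℕ) : ∀ a i, 1 ≤ i → i + 1 ≤ n →
    KOp n a i = mulOp (fun S => kc i S.1) := by
  induction n with
  | zero => intro a i h1 h2; omega
  | succ m ih =>
    rcases m with _ | k
    · intro a i h1 h2; omega
    · intro a i h1 h2
      rcases a with _ | a
      · apply LinearMap.ext; intro f; funext S
        have hS : S.1 = ∅ := Finset.card_eq_zero.mp S.2.2
        show f S = kc i S.1 * f S
        rw [hS]
        simp [kc]
      · have hunf : KOp (k+2) (a+1) i = if a + 1 = k + 2 then 1 else if i = k+1 then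
            ((iminus (k+1) a) ∘ₗ (diagOp (k+1) a k 1 qq) ∘ₗ (pminus (k+1) a)
            + (izero (k+1) (a+1)) ∘ₗ (diagOp (k+1) (a+1) k qq⁻¹ 1) ∘ₗ (pzero (k+1) (a+1)))
          else
            ((iminus (k+1) a) ∘ₗ (KOp (k+1) a i) ∘ₗ (pminus (k+1) a)
            + (izero (k+1) (a+1)) ∘ₗ (KOp (k+1) (a+1) i) ∘ₗ (pzero (k+1) (a+1))) := rfl
        rw [hunf]
        by_cases hfull : a + 1 = k + 2
        · rw [if_pos hfull]
          apply LinearMap.ext; intro f; funext S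
          have hS : S.1 = range (k+2) :=
            Finset.eq_of_subset_of_card_le S.2.1 (by rw [Finset.card_range, S.2.2, hfull])
          show f S = kc i S.1 * f S
          rw [hS, kc, if_pos (mem_range.mpr (by omega : i < k + 2)),
            if_pos (mem_range.mpr (by omega : i - 1 < k + 2)),
            mul_inv_cancel₀ qq_ne_zero, one_mul]
        · rw [if_neg hfull]
          by_cases htop : i = k + 1
          · subst htop
            rw [if_pos rfl]
            apply LinearMap.ext; intro f; funext S
            show (iminus (k+1) a) ((diagOp (k+1) a k 1 qq) ((pminus (k+1) a) f)) S
              + (izero (k+1) (a+1)) ((diagOp (k+1) (a+1) k qq⁻¹ 1) ((pzero (k+1) (a+1)) f)) S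
              = kc (k+1) S.1 * f S
            by_cases h3 : k + 1 ∈ S.1
            · have e0 : (iminus (k+1) a) ((diagOp (k+1) a k 1 qq) ((pminus (k+1) a) f)) S
                  = (if k ∈ S.1.erase (k+1) then (1:A) else qq) *
                    f ⟨insert (k+1) (S.1.erase (k+1)), by
                      constructor
                      · intro x hx
                        rcases Finset.mem_insert.mp hx with rfl | hx
                        · simp
                        · exact S.2.1 (Finset.mem_of_mem_erase hx)
                      · rw [Finset.card_insert_of_notMem (Finset.notMem_erase _ _),
                          Finset.card_erase_of_mem h3, S.2.2]; omega⟩ := by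
                show dite (k+1 ∈ S.1) _ _ = _
                rw [dif_pos h3]
                rfl
              have e1 : (izero (k+1) (a+1)) ((diagOp (k+1) (a+1) k qq⁻¹ 1)
                  ((pzero (k+1) (a+1)) f)) S = 0 := by
                show dite (k+1 ∈ S.1) _ _ = _
                rw [dif_pos h3]
              rw [e0, e1, add_zero, congr_fun_BS f (Finset.insert_erase h3)]
              unfold kc
              rw [if_pos h3]
              by_cases h4 : k ∈ S.1
              · rw [if_pos (Finset.mem_erase.mpr ⟨by omega, h4⟩),
                  if_pos (show k + 1 - 1 ∈ S.1 by simpa using h4),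
                  mul_inv_cancel₀ qq_ne_zero, one_mul]
              · rw [if_neg (fun hc => h4 (Finset.mem_of_mem_erase hc)),
                  if_neg (show ¬ k + 1 - 1 ∈ S.1 by simpa using h4), mul_one]
            · have e0 : (iminus (k+1) a) ((diagOp (k+1) a k 1 qq) ((pminus (k+1) a) f)) S
                  = 0 := by
                show dite (k+1 ∈ S.1) _ _ = _
                rw [dif_neg h3]
              have e1 : (izero (k+1) (a+1)) ((diagOp (k+1) (a+1) k qq⁻¹ 1)
                  ((pzero (k+1) (a+1)) f)) S
                  = (if k ∈ S.1 then qq⁻¹ else 1) * f S := by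
                show dite (k+1 ∈ S.1) _ _ = _
                rw [dif_neg h3]
                rfl
              rw [e0, e1, zero_add]
              unfold kc
              rw [if_neg h3, one_mul]
              simp
          · rw [if_neg htop]
            rw [ih a i h1 (by omega), ih (a+1) i h1 (by omega)]
            apply LinearMap.ext; intro f; funext S
            show (iminus (k+1) a) ((mulOp (fun S => kc i S.1)) ((pminus (k+1) a) f)) S
              + (izero (k+1) (a+1)) ((mulOp (fun S => kc i S.1)) ((pzero (k+1) (a+1)) f)) S
              = kc i S.1 * f S
            have hik : i ≠ k + 1 := htop
            have hik' : i - 1 ≠ k + 1 := by omega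
            by_cases h3 : k + 1 ∈ S.1
            · have e1 : (izero (k+1) (a+1)) ((mulOp (fun S => kc i S.1))
                  ((pzero (k+1) (a+1)) f)) S = 0 := by
                show dite (k+1 ∈ S.1) _ _ = _
                rw [dif_pos h3]
              have e0 : (iminus (k+1) a) ((mulOp (fun S => kc i S.1))
                  ((pminus (k+1) a) f)) S
                  = kc i (S.1.erase (k+1)) * f ⟨insert (k+1) (S.1.erase (k+1)), by
                      constructor
                      · intro x hx
                        rcases Finset.mem_insert.mp hx with rfl | hx
                        · simp
                        · exact S.2.1 (Finset.mem_of_mem_erase hx)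
                      · rw [Finset.card_insert_of_notMem (Finset.notMem_erase _ _),
                          Finset.card_erase_of_mem h3, S.2.2]; omega⟩ := by
                show dite (k+1 ∈ S.1) _ _ = _
                rw [dif_pos h3]
                rfl
              rw [e0, e1, add_zero, congr_fun_BS f (Finset.insert_erase h3),
                show kc i (S.1.erase (k+1)) = kc i S.1 from
                  kc_congr (by simp [Finset.mem_erase, hik])
                    (by simp [Finset.mem_erase, hik'])]
            · have e0 : (iminus (k+1) a) ((mulOp (fun S => kc i S.1))
                  ((pminus (k+1) a) f)) S = 0 := by
                show dite (k+1 ∈ S.1) _ _ = _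
                rw [dif_neg h3]
              have e1 : (izero (k+1) (a+1)) ((mulOp (fun S => kc i S.1))
                  ((pzero (k+1) (a+1)) f)) S = kc i S.1 * f S := by
                show dite (k+1 ∈ S.1) _ _ = _
                rw [dif_neg h3]
                rfl
              rw [e0, e1, zero_add]

lemma tauOp_eq (n a : ℕ) : tauOp n a
    = mulOp (fun S => ∏ j ∈ Finset.range (n-1), kc (j+1) S.1 ^ ((j+1) * (n - (j+1)))) := by
  unfold tauOp
  have h : (fun i : Fin (n-1) => (KOp n a ((i : ℕ)+1)) ^ (((i : ℕ)+1) * (n - ((i : ℕ)+1))))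
      = fun i : Fin (n-1) => mulOpHom n a
          ((fun S : BS n a => kc ((i : ℕ)+1) S.1) ^ (((i : ℕ)+1) * (n - ((i : ℕ)+1)))) := by
    funext i
    rw [KOp_eq n a ((i:ℕ)+1) (by omega) (by have := i.2; omega), map_pow]
    rfl
  rw [h, show (List.ofFn fun i : Fin (n-1) => (mulOpHom n a)
        ((fun S : BS n a => kc ((i : ℕ)+1) S.1) ^ (((i : ℕ)+1) * (n - ((i : ℕ)+1)))))
      = List.map (mulOpHom n a) (List.ofFn (fun i : Fin (n-1) =>
          (fun S : BS n a => kc ((i : ℕ)+1) S.1) ^ (((i : ℕ)+1) * (n - ((i : ℕ)+1)))))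
      from List.map_ofFn.symm,
    List.prod_hom _ (mulOpHom n a), List.prod_ofFn]
  show mulOp _ = _
  congr 1
  funext S
  rw [Finset.prod_apply,
    ← Fin.prod_univ_eq_prod_range (fun j => kc (j+1) S.1 ^ ((j+1) * (n - (j+1)))) (n-1)]
  exact Finset.prod_congr rfl (fun i _ => rfl)

lemma prod_zpow₀ {β : Type*} (s : Finset β) (f : β → ℤ) :
    ∏ b ∈ s, qq ^ f b = qq ^ (∑ b ∈ s, f b) := by
  classical
  induction s using Finset.cons_induction with
  | empty => simp
  | cons b s hb ih => rw [Finset.prod_cons, Finset.sum_cons, zpow_add₀ qq_ne_zero, ih]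

lemma kc_pow (i : ℕ) (s : Finset ℕ) (m : ℕ) :
    kc i s ^ m = qq ^ ((m : ℤ) *
      ((if i ∈ s then (1:ℤ) else 0) - (if i - 1 ∈ s then (1:ℤ) else 0))) := by
  unfold kc
  by_cases h1 : i ∈ s <;> by_cases h2 : i - 1 ∈ s
  · rw [if_pos h1, if_pos h2, if_pos h1, if_pos h2, mul_inv_cancel₀ qq_ne_zero, one_pow,
      show ((m:ℤ) * ((1:ℤ) - 1)) = 0 by ring, zpow_zero]
  · rw [if_pos h1, if_neg h2, if_pos h1, if_neg h2, mul_one,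
      show ((m:ℤ) * ((1:ℤ) - 0)) = (m:ℤ) by ring, zpow_natCast]
  · rw [if_neg h1, if_pos h2, if_neg h1, if_pos h2, one_mul,
      show ((m:ℤ) * ((0:ℤ) - 1)) = -(m:ℤ) by ring, zpow_neg, zpow_natCast, inv_pow]
  · rw [if_neg h1, if_neg h2, if_neg h1, if_neg h2, mul_one, one_pow,
      show ((m:ℤ) * ((0:ℤ) - 0)) = 0 by ring, zpow_zero]

lemma E_eq (n : ℕ) (S : Finset ℕ) (hS : S ⊆ range n) :
    (∑ j ∈ range (n-1), (((j+1) * (n - (j+1)) : ℕ) : ℤ) *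
        ((if j + 1 ∈ S then (1:ℤ) else 0) - (if j + 1 - 1 ∈ S then (1:ℤ) else 0)))
    = ∑ s ∈ S, (2 * (s:ℤ) + 1 - n) := by
  have hterm : ∀ j ∈ range (n-1),
      (((j+1) * (n - (j+1)) : ℕ) : ℤ) *
        ((if j + 1 ∈ S then (1:ℤ) else 0) - (if j + 1 - 1 ∈ S then (1:ℤ) else 0))
      = (if j + 1 ∈ S then ((j+1:ℕ):ℤ) * ((n:ℤ) - ((j+1:ℕ):ℤ)) else 0)
        - (if j ∈ S then ((j:ℤ)+1) * ((n:ℤ) - 1 - (j:ℤ)) else 0) := by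
    intro j hj
    have hjn : j + 1 ≤ n := by have := mem_range.mp hj; omega
    rw [Nat.cast_mul, Nat.cast_sub hjn, show j + 1 - 1 = j from by omega]
    by_cases h1 : j + 1 ∈ S <;> by_cases h2 : j ∈ S <;>
      simp only [if_pos, if_neg, h1, h2, if_true, if_false] <;> push_cast <;> ring
  rw [Finset.sum_congr rfl hterm, Finset.sum_sub_distrib]
  have hfirst : ∑ j ∈ range (n-1),
      (if j + 1 ∈ S then ((j+1:ℕ):ℤ) * ((n:ℤ) - ((j+1:ℕ):ℤ)) else 0)
      = ∑ s ∈ S, (s:ℤ) * ((n:ℤ) - (s:ℤ)) := by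
    have h0 : ∑ k ∈ range n, (if k ∈ S then (k:ℤ) * ((n:ℤ) - (k:ℤ)) else 0)
        = ∑ j ∈ range (n-1),
          (if j + 1 ∈ S then ((j+1:ℕ):ℤ) * ((n:ℤ) - ((j+1:ℕ):ℤ)) else 0) := by
      rcases n with _ | m
      · simp
      · rw [Finset.sum_range_succ'
          (fun k => if k ∈ S then (k:ℤ) * (((m+1:ℕ):ℤ) - (k:ℤ)) else 0) m]
        simp
    rw [← h0, Finset.sum_ite_mem, Finset.inter_eq_right.mpr hS]
  have hsecond : ∑ j ∈ range (n-1),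
      (if j ∈ S then ((j:ℤ)+1) * ((n:ℤ) - 1 - (j:ℤ)) else 0)
      = ∑ s ∈ S, ((s:ℤ)+1) * ((n:ℤ) - 1 - (s:ℤ)) := by
    rcases n with _ | m
    · have hSe : S = ∅ := Finset.subset_empty.mp (by simpa using hS)
      subst hSe; simp
    · have hlast : (if m ∈ S then ((m:ℤ)+1) * (((m+1:ℕ):ℤ) - 1 - (m:ℤ)) else 0) = 0 := by
        have hz : ((m+1:ℕ):ℤ) - 1 - (m:ℤ) = 0 := by push_cast; ring
        rw [hz, mul_zero, ite_self]
      have hext : ∑ j ∈ range (m+1),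
            (if j ∈ S then ((j:ℤ)+1) * (((m+1:ℕ):ℤ) - 1 - (j:ℤ)) else 0)
          = ∑ j ∈ range m, (if j ∈ S then ((j:ℤ)+1) * (((m+1:ℕ):ℤ) - 1 - (j:ℤ)) else 0) := by
        rw [Finset.sum_range_succ, hlast, add_zero]
      rw [show m + 1 - 1 = m from rfl, ← hext, Finset.sum_ite_mem,
        Finset.inter_eq_right.mpr hS]
  rw [hfirst, hsecond, ← Finset.sum_sub_distrib]
  refine Finset.sum_congr rfl (fun s _ => ?_)
  push_cast
  ring

lemma invD_key (n : ℕ) (T : Finset ℕ) (hT : T ⊆ range n) :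
    (invD n T : ℤ) - invD n (range n \ T) = ∑ s ∈ (range n \ T), (2 * (s:ℤ) + 1 - n) := by
  set S := range n \ T with hSdef
  have hS : S ⊆ range n := Finset.sdiff_subset
  have hTS : range n \ S = T := by
    rw [hSdef, Finset.sdiff_sdiff_self_left, Finset.inter_eq_right.mpr hT]
  have hiT : (invD n T : ℤ) = ∑ j ∈ S, ((j:ℤ) - ((S ∩ range j).card : ℤ)) := by
    unfold invD
    push_cast
    refine Finset.sum_congr rfl (fun j hj => ?_)
    have hjn : j < n := mem_range.mp (hS hj)
    have h1 : S ∩ range j = range j \ T := by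
      rw [hSdef]; ext x
      simp only [mem_inter, mem_sdiff, mem_range]
      constructor
      · rintro ⟨⟨hx1, hx2⟩, hx3⟩; exact ⟨hx3, hx2⟩
      · rintro ⟨hx1, hx2⟩; exact ⟨⟨by omega, hx2⟩, hx1⟩
    have hpart := Finset.card_inter_add_card_sdiff (range j) T
    rw [Finset.card_range] at hpart
    rw [h1, Finset.inter_comm]
    omega
  have hiS : (invD n S : ℤ) = ∑ j ∈ T, ((S ∩ range j).card : ℤ) := by
    unfold invD
    rw [hTS]
    push_cast
    rfl
  have hsplit : ∑ j ∈ S, ((S ∩ range j).card : ℤ) + ∑ j ∈ T, ((S ∩ range j).card : ℤ)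
      = ∑ j ∈ range n, ((S ∩ range j).card : ℤ) :=
    Finset.sum_sdiff hT
  have hcount : ∑ j ∈ range n, ((S ∩ range j).card : ℤ) = ∑ s ∈ S, ((n:ℤ) - 1 - s) := by
    have h1 : ∀ j, ((S ∩ range j).card : ℤ) = ∑ s ∈ S, (if s < j then (1:ℤ) else 0) := by
      intro j
      have h2 : S ∩ range j = S.filter (fun s => s < j) := by
        ext x; simp [Finset.mem_filter, Finset.mem_range]
      rw [h2, Finset.sum_boole]
    rw [Finset.sum_congr rfl (fun j _ => h1 j), Finset.sum_comm]
    refine Finset.sum_congr rfl (fun s hs => ?_)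
    have hsn : s < n := mem_range.mp (hS hs)
    have h3 : (range n).filter (fun j => s < j) = Finset.Ico (s+1) n := by
      ext x; simp only [Finset.mem_filter, Finset.mem_range, Finset.mem_Ico]; omega
    rw [Finset.sum_boole, h3, Nat.card_Ico]
    omega
  have h4 : ∑ j ∈ S, ((S ∩ range j).card : ℤ) + ∑ j ∈ T, ((S ∩ range j).card : ℤ)
      = ∑ s ∈ S, ((n:ℤ) - 1 - s) := hsplit.trans hcount
  have h5 : ∑ s ∈ S, (2 * (s:ℤ) + 1 - n) = ∑ s ∈ S, (s:ℤ) - ∑ s ∈ S, ((n:ℤ) - 1 - s) := by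
    rw [← Finset.sum_sub_distrib]
    exact Finset.sum_congr rfl (fun s _ => by ring)
  rw [hiT, hiS, Finset.sum_sub_distrib, h5]
  linarith [h4]

lemma neg_one_pow_helper (j k m : ℕ) (h : Even ((j:ℤ) + (k:ℤ) - (m:ℤ))) :
    (-1 : A) ^ j = (-1) ^ m * (-1) ^ k := by
  rw [← pow_add]
  have hpar : Even (j + (m + k)) := by
    have hz : Even ((j:ℤ) + ((m:ℤ) + (k:ℤ))) := by
      rcases h with ⟨t, ht⟩
      exact ⟨t + m, by linarith⟩
    have := (Int.even_coe_nat (j + (m + k))).mp (by push_cast; exact hz)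
    exact this
  have hiff := Nat.even_add.mp hpar
  rcases Nat.even_or_odd j with hj | hj
  · rw [hj.neg_one_pow, (hiff.mp hj).neg_one_pow]
  · have hodd : Odd (m + k) := by
      rcases Nat.even_or_odd (m + k) with he | ho
      · exact absurd (hiff.mpr he) (Nat.not_even_iff_odd.mpr hj)
      · exact ho
    rw [hj.neg_one_pow, hodd.neg_one_pow]

lemma key_scalar (n : ℕ) (T : Finset ℕ) (hT : T ⊆ range n) :
    ((-qq) ^ invD n T)⁻¹ *
      (∏ j ∈ range (n-1), kc (j+1) (range n \ T) ^ ((j+1) * (n - (j+1))))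
    = (-1:A) ^ ((n+1) * T.card) * ((-qq) ^ invD n (range n \ T))⁻¹ := by
  have hS : range n \ T ⊆ range n := Finset.sdiff_subset
  have hprod : ∏ j ∈ range (n-1), kc (j+1) (range n \ T) ^ ((j+1) * (n - (j+1)))
      = qq ^ ((invD n T : ℤ) - invD n (range n \ T)) := by
    rw [show (∏ j ∈ range (n-1), kc (j+1) (range n \ T) ^ ((j+1) * (n - (j+1))))
        = ∏ j ∈ range (n-1), qq ^ ((((j+1) * (n - (j+1)) : ℕ) : ℤ) *
            ((if j + 1 ∈ range n \ T then (1:ℤ) else 0)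
              - (if j + 1 - 1 ∈ range n \ T then (1:ℤ) else 0)))
        from Finset.prod_congr rfl (fun j _ => kc_pow _ _ _),
      prod_zpow₀, E_eq n _ hS, ← invD_key n T hT]
  rw [hprod]
  have hsign : ∀ kk : ℕ, ((-1:A) ^ kk)⁻¹ = (-1) ^ kk := fun kk => by
    rw [← inv_pow, inv_neg, inv_one]
  have hq1 : (qq ^ invD n T)⁻¹ * qq ^ ((invD n T : ℤ) - invD n (range n \ T))
      = (qq ^ invD n (range n \ T))⁻¹ := by
    rw [← zpow_natCast qq (invD n T), ← zpow_natCast qq (invD n (range n \ T)),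
      ← zpow_neg, ← zpow_neg, ← zpow_add₀ qq_ne_zero]
    congr 1
    ring
  have hsgn : (-1 : A) ^ invD n T = (-1) ^ ((n+1) * T.card) * (-1) ^ invD n (range n \ T) := by
    apply neg_one_pow_helper
    -- Even (iT + iS - (n+1)*a)
    have hkey := invD_key n T hT
    have hsum : ∑ s ∈ (range n \ T), (2 * (s:ℤ) + 1 - n)
        = 2 * ∑ s ∈ (range n \ T), (s:ℤ) + ((range n \ T).card : ℤ) * (1 - n) := by
      rw [show (∑ s ∈ (range n \ T), (2 * (s:ℤ) + 1 - n))
          = ∑ s ∈ (range n \ T), (2 * (s:ℤ) + ((1:ℤ) - n))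
          from Finset.sum_congr rfl (fun s _ => by ring),
        Finset.sum_add_distrib, ← Finset.mul_sum, Finset.sum_const, nsmul_eq_mul]
    have hcard : ((range n \ T).card : ℤ) = (n:ℤ) - T.card := by
      have h1 : T.card ≤ n := by
        have := Finset.card_le_card hT
        rwa [Finset.card_range] at this
      rw [Finset.card_sdiff_of_subset hT, Finset.card_range]
      omega
    obtain ⟨w, hw⟩ := Int.even_mul_succ_self ((n:ℤ) - 1)
    refine ⟨∑ s ∈ (range n \ T), (s:ℤ) + (invD n (range n \ T) : ℤ) - w - T.card, ?_⟩
    push_cast at hkey hsum hcard hw ⊢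
    linear_combination hkey + hsum + (1 - (n:ℤ)) * hcard - hw
  calc ((-qq) ^ invD n T)⁻¹ * qq ^ ((invD n T : ℤ) - invD n (range n \ T))
      = ((-1:A) ^ invD n T) * ((qq ^ invD n T)⁻¹ *
          qq ^ ((invD n T : ℤ) - invD n (range n \ T))) := by
        rw [neg_pow qq, mul_inv, hsign]
        ring
    _ = ((-1:A) ^ ((n+1) * T.card) * (-1) ^ invD n (range n \ T)) *
          (qq ^ invD n (range n \ T))⁻¹ := by rw [hq1, hsgn]
    _ = (-1:A) ^ ((n+1) * T.card) * ((-qq) ^ invD n (range n \ T))⁻¹ := by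
        rw [neg_pow qq, mul_inv, hsign]
        ring

/-- The complementation bijection on basis subsets. -/
def cplEquiv (n a : ℕ) (ha : a ≤ n) : BS n a ≃ BS n (n - a) where
  toFun T := ⟨range n \ T.1, ⟨Finset.sdiff_subset, by
    rw [Finset.card_sdiff_of_subset T.2.1, Finset.card_range, T.2.2]⟩⟩
  invFun T := ⟨range n \ T.1, ⟨Finset.sdiff_subset, by
    rw [Finset.card_sdiff_of_subset T.2.1, Finset.card_range, T.2.2]; omega⟩⟩
  left_inv T := Subtype.ext (by
    show range n \ (range n \ T.1) = T.1
    rw [Finset.sdiff_sdiff_self_left, Finset.inter_eq_right.mpr T.2.1])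
  right_inv T := Subtype.ext (by
    show range n \ (range n \ T.1) = T.1
    rw [Finset.sdiff_sdiff_self_left, Finset.inter_eq_right.mpr T.2.1])

lemma term_helper {n a b : ℕ} (w : V n a) (v : V n b) (X X' : BS n b) (Y T : BS n a)
    (c1 c2 P e : A) (hX : X.1 = X'.1) (hY : Y.1 = T.1) (hc : c1 * P = e * c2) :
    c1 * (w T * (P * v X)) = e * (c2 * (v X' * w Y)) := by
  rw [congr_fun_BS v hX, congr_fun_BS w hY]
  calc c1 * (w T * (P * v X')) = (c1 * P) * (v X' * w T) := by ring
    _ = (e * c2) * (v X' * w T) := by rw [hc]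
    _ = e * (c2 * (v X' * w T)) := by ring

end St11

/-- for every `n ≥ 1` and `0 ≤ a ≤ n`, for all `v ∈ V_{n-a}^n`,
`d_{a,n}^*(ev(τ_n · v)) = (-1)^{(n+1)a} d_{n-a,n}(v)`, where `ev` is the canonical
evaluation map into the double dual and `d_{a,n}^*` is the transpose of `d_{a,n}`. -/
theorem statement11 (n : ℕ) (hn : 1 ≤ n) (a : ℕ) (ha : a ≤ n) (v : V n (n-a)) :
    (dmap n a (n-a)).dualMap ((Module.Dual.eval A (V n (n-a))) (tauOp n (n-a) v))
      = ((-1 : A) ^ ((n+1) * a)) • dmap n (n-a) a v := by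
  apply LinearMap.ext
  intro w
  have h1 : a + (n - a) = n := by omega
  have h2 : (n - a) + a = n := by omega
  rw [LinearMap.dualMap_apply, Module.Dual.eval_apply, LinearMap.smul_apply, smul_eq_mul,
    St11.tauOp_eq n (n-a), St11.dmap_apply n a (n-a) h1 w _,
    St11.dmap_apply n (n-a) a h2 v w,
    ← Equiv.sum_comp (St11.cplEquiv n a ha), Finset.mul_sum]
  refine Finset.sum_congr rfl (fun T _ => ?_)
  simp only [St11.mulOp_apply]
  have hks := St11.key_scalar n T.1 T.2.1
  rw [T.2.2] at hks
  refine St11.term_helper w v _ _ _ T _ _ _ _ rfl ?_ hks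
  show Finset.range n \ (Finset.range n \ T.1) = T.1
  rw [Finset.sdiff_sdiff_self_left, Finset.inter_eq_right.mpr T.2.1]

end
end

section
/- For a + b + c = n, the vector v_out^n_{a,b,c} ∈ V_a^n ⊗ V_b^n ⊗ V_c^n is U_q(sl_n)-invariant: for every i = 1, …, n−1, Δ^{(2)}(X_i^±) · v_out^n_{a,b,c} = 0 and Δ^{(2)}(K_i) · v_out^n_{a,b,c} = v_out^n_{a,b,c}; equivalently, the 𝔸-linear map 𝔸 → V_a^n ⊗ V_b^n ⊗ V_c^n sending 1 to v_out^n_{a,b,c} is a map of U_q(sl_n)-modules. -/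
noncomputable section

open scoped TensorProduct

set_option maxHeartbeats 1000000
set_option synthInstance.maxHeartbeats 400000

/-- The action of `Δ⁽²⁾(X_i⁺) = X_i⁺ ⊗ K_i ⊗ K_i + 1 ⊗ X_i⁺ ⊗ K_i + 1 ⊗ 1 ⊗ X_i⁺` on
`V_a^n ⊗ V_b^n ⊗ V_c^n`. -/
def t3Xp (n a b c i : ℕ) : Module.End A (V n a ⊗[A] (V n b ⊗[A] V n c)) :=
  TensorProduct.map (XpOp n a i) (TensorProduct.map (KOp n b i) (KOp n c i))
  + TensorProduct.map LinearMap.id (TensorProduct.map (XpOp n b i) (KOp n c i))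
  + TensorProduct.map LinearMap.id (TensorProduct.map LinearMap.id (XpOp n c i))

/-- The action of `Δ⁽²⁾(X_i⁻) = X_i⁻ ⊗ 1 ⊗ 1 + K_i⁻¹ ⊗ X_i⁻ ⊗ 1 + K_i⁻¹ ⊗ K_i⁻¹ ⊗ X_i⁻`. -/
def t3Xm (n a b c i : ℕ) : Module.End A (V n a ⊗[A] (V n b ⊗[A] V n c)) :=
  TensorProduct.map (XmOp n a i) (TensorProduct.map LinearMap.id LinearMap.id)
  + TensorProduct.map (KinvOp n a i) (TensorProduct.map (XmOp n b i) LinearMap.id)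
  + TensorProduct.map (KinvOp n a i) (TensorProduct.map (KinvOp n b i) (XmOp n c i))

/-- The action of `Δ⁽²⁾(K_i) = K_i ⊗ K_i ⊗ K_i`. -/
def t3K (n a b c i : ℕ) : Module.End A (V n a ⊗[A] (V n b ⊗[A] V n c)) :=
  TensorProduct.map (KOp n a i) (TensorProduct.map (KOp n b i) (KOp n c i))

/-- The action of `Δ⁽²⁾(K_i⁻¹) = K_i⁻¹ ⊗ K_i⁻¹ ⊗ K_i⁻¹`. -/
def t3Kinv (n a b c i : ℕ) : Module.End A (V n a ⊗[A] (V n b ⊗[A] V n c)) :=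
  TensorProduct.map (KinvOp n a i) (TensorProduct.map (KinvOp n b i) (KinvOp n c i))


/-! ### Auxiliary lemmas -/

lemma BS_isEmpty {n a : ℕ} (h : n < a) : IsEmpty (BS n a) := by
  constructor
  intro s
  have := Finset.card_le_card s.2.1
  rw [s.2.2, Finset.card_range] at this
  omega

lemma V_map_eq {n a : ℕ} (h : n < a) {M : Type} [AddCommMonoid M] [Module A M]
    (f g : V n a →ₗ[A] M) : f = g := by
  apply LinearMap.ext; intro x
  have hx : x = 0 := by
    funext s
    exact ((BS_isEmpty h).false s).elim
  rw [hx, map_zero, map_zero]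

@[simp] lemma pm_im_apply {n a : ℕ} (f : V n a) : pminus n a (iminus n a f) = f := by
  funext t
  have hn : n ∉ t.1 := fun h => by have := t.2.1 h; simp at this
  simp only [pminus, iminus, LinearMap.coe_mk, AddHom.coe_mk]
  rw [dif_pos (Finset.mem_insert_self n t.1)]
  congr 1
  exact Subtype.ext (Finset.erase_insert hn)

@[simp] lemma pz_iz_apply {n a : ℕ} (f : V n a) : pzero n a (izero n a f) = f := by
  funext t
  have hn : n ∉ t.1 := fun h => by have := t.2.1 h; simp at this
  simp only [pzero, izero, LinearMap.coe_mk, AddHom.coe_mk]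
  rw [dif_neg hn]

@[simp] lemma pm_iz_apply {n a : ℕ} (f : V n (a+1)) : pminus n a (izero n (a+1) f) = 0 := by
  funext t
  simp only [pminus, izero, LinearMap.coe_mk, AddHom.coe_mk]
  rw [dif_pos (Finset.mem_insert_self n t.1)]
  rfl

@[simp] lemma pz_im_apply {n a : ℕ} (f : V n a) : pzero n (a+1) (iminus n a f) = 0 := by
  funext t
  have hn : n ∉ t.1 := fun h => by have := t.2.1 h; simp at this
  simp only [pzero, iminus, LinearMap.coe_mk, AddHom.coe_mk]
  rw [dif_neg hn]
  rfl

@[simp] lemma diag_im_apply {n a : ℕ} (x y : A) (f : V n a) :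
    diagOp (n+1) (a+1) n x y (iminus n a f) = x • iminus n a f := by
  funext s
  by_cases h : n ∈ s.1
  · simp [diagOp, h]
  · simp [diagOp, iminus, h]

@[simp] lemma diag_iz_apply {n a : ℕ} (x y : A) (f : V n a) :
    diagOp (n+1) a n x y (izero n a f) = y • izero n a f := by
  funext s
  by_cases h : n ∈ s.1
  · simp [diagOp, izero, h]
  · simp [diagOp, h]

/-! ### Boundary values of the operators -/

lemma End_eq {n a : ℕ} (h : n < a) (f g : Module.End A (V n a)) : f = g := V_map_eq h f g

lemma XpOp_hi {n a : ℕ} (i : ℕ) (h : n ≤ a) : XpOp n a i = 0 := by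
  rcases n with _|_|m
  · rfl
  · rfl
  · rcases a with _|a
    · omega
    · by_cases h2 : a + 1 = m + 2
      · simp [XpOp, h2]
      · exact End_eq (by omega) _ _

lemma XmOp_hi {n a : ℕ} (i : ℕ) (h : n ≤ a) : XmOp n a i = 0 := by
  rcases n with _|_|m
  · rfl
  · rfl
  · rcases a with _|a
    · omega
    · by_cases h2 : a + 1 = m + 2
      · simp [XmOp, h2]
      · exact End_eq (by omega) _ _

lemma KOp_hi {n a : ℕ} (i : ℕ) (h : n ≤ a) : KOp n a i = 1 := by
  rcases n with _|_|m
  · rfl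
  · rfl
  · rcases a with _|a
    · omega
    · by_cases h2 : a + 1 = m + 2
      · simp [KOp, h2]
      · exact End_eq (by omega) _ _

lemma KinvOp_hi {n a : ℕ} (i : ℕ) (h : n ≤ a) : KinvOp n a i = 1 := by
  rcases n with _|_|m
  · rfl
  · rfl
  · rcases a with _|a
    · omega
    · by_cases h2 : a + 1 = m + 2
      · simp [KinvOp, h2]
      · exact End_eq (by omega) _ _

lemma XpOp_bot {n : ℕ} (i : ℕ) : XpOp n 0 i = 0 := by rcases n with _|_|m <;> rfl
lemma XmOp_bot {n : ℕ} (i : ℕ) : XmOp n 0 i = 0 := by rcases n with _|_|m <;> rfl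
lemma KOp_bot {n : ℕ} (i : ℕ) : KOp n 0 i = 1 := by rcases n with _|_|m <;> rfl
lemma KinvOp_bot {n : ℕ} (i : ℕ) : KinvOp n 0 i = 1 := by rcases n with _|_|m <;> rfl

/-! ### Commutation of the non-top generators with the inclusions -/

lemma step_comp_iminus {n a : ℕ} (f : Module.End A (V (n+1) a)) (g : Module.End A (V (n+1) (a+1))) :
    ((iminus (n+1) a) ∘ₗ f ∘ₗ (pminus (n+1) a)
      + (izero (n+1) (a+1)) ∘ₗ g ∘ₗ (pzero (n+1) (a+1))) ∘ₗ iminus (n+1) a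
    = iminus (n+1) a ∘ₗ f := by
  apply LinearMap.ext; intro v
  simp [LinearMap.add_apply, LinearMap.comp_apply]

lemma step_comp_izero {n a : ℕ} (f : Module.End A (V (n+1) a)) (g : Module.End A (V (n+1) (a+1))) :
    ((iminus (n+1) a) ∘ₗ f ∘ₗ (pminus (n+1) a)
      + (izero (n+1) (a+1)) ∘ₗ g ∘ₗ (pzero (n+1) (a+1))) ∘ₗ izero (n+1) (a+1)
    = izero (n+1) (a+1) ∘ₗ g := by
  apply LinearMap.ext; intro v
  simp [LinearMap.add_apply, LinearMap.comp_apply]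

lemma XpOp_ci {n a i : ℕ} (hi : i + 1 ≤ n) :
    XpOp (n+1) (a+1) i ∘ₗ iminus n a = iminus n a ∘ₗ XpOp n a i := by
  obtain ⟨m, rfl⟩ : ∃ m, n = m + 1 := ⟨n - 1, by omega⟩
  by_cases ha : a + 1 = m + 2
  · rw [XpOp_hi i (by omega), XpOp_hi i (by omega)]
    simp
  · have hi' : ¬ i = m + 1 := by omega
    simp only [XpOp, if_neg ha, if_neg hi']
    exact step_comp_iminus _ _

lemma XpOp_cz {n a i : ℕ} (hi : i + 1 ≤ n) :
    XpOp (n+1) a i ∘ₗ izero n a = izero n a ∘ₗ XpOp n a i := by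
  obtain ⟨m, rfl⟩ : ∃ m, n = m + 1 := ⟨n - 1, by omega⟩
  rcases a with _|a
  · rw [XpOp_bot, XpOp_bot]; simp
  · by_cases ha : a + 1 = m + 2
    · rw [XpOp_hi i (by omega), XpOp_hi i (by omega)]
      simp
    · have hi' : ¬ i = m + 1 := by omega
      simp only [XpOp, if_neg ha, if_neg hi']
      exact step_comp_izero _ _

lemma XmOp_ci {n a i : ℕ} (hi : i + 1 ≤ n) :
    XmOp (n+1) (a+1) i ∘ₗ iminus n a = iminus n a ∘ₗ XmOp n a i := by
  obtain ⟨m, rfl⟩ : ∃ m, n = m + 1 := ⟨n - 1, by omega⟩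
  by_cases ha : a + 1 = m + 2
  · rw [XmOp_hi i (by omega), XmOp_hi i (by omega)]
    simp
  · have hi' : ¬ i = m + 1 := by omega
    simp only [XmOp, if_neg ha, if_neg hi']
    exact step_comp_iminus _ _

lemma XmOp_cz {n a i : ℕ} (hi : i + 1 ≤ n) :
    XmOp (n+1) a i ∘ₗ izero n a = izero n a ∘ₗ XmOp n a i := by
  obtain ⟨m, rfl⟩ : ∃ m, n = m + 1 := ⟨n - 1, by omega⟩
  rcases a with _|a
  · rw [XmOp_bot, XmOp_bot]; simp
  · by_cases ha : a + 1 = m + 2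
    · rw [XmOp_hi i (by omega), XmOp_hi i (by omega)]
      simp
    · have hi' : ¬ i = m + 1 := by omega
      simp only [XmOp, if_neg ha, if_neg hi']
      exact step_comp_izero _ _

lemma KOp_ci {n a i : ℕ} (hi : i + 1 ≤ n) :
    KOp (n+1) (a+1) i ∘ₗ iminus n a = iminus n a ∘ₗ KOp n a i := by
  obtain ⟨m, rfl⟩ : ∃ m, n = m + 1 := ⟨n - 1, by omega⟩
  by_cases ha : a + 1 = m + 2
  · rw [KOp_hi i (by omega), KOp_hi i (by omega)]
    rfl
  · have hi' : ¬ i = m + 1 := by omega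
    simp only [KOp, if_neg ha, if_neg hi']
    exact step_comp_iminus _ _

lemma KOp_cz {n a i : ℕ} (hi : i + 1 ≤ n) :
    KOp (n+1) a i ∘ₗ izero n a = izero n a ∘ₗ KOp n a i := by
  obtain ⟨m, rfl⟩ : ∃ m, n = m + 1 := ⟨n - 1, by omega⟩
  rcases a with _|a
  · rw [KOp_bot, KOp_bot]; rfl
  · by_cases ha : a + 1 = m + 2
    · rw [KOp_hi i (by omega), KOp_hi i (by omega)]
      rfl
    · have hi' : ¬ i = m + 1 := by omega
      simp only [KOp, if_neg ha, if_neg hi']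
      exact step_comp_izero _ _

lemma KinvOp_ci {n a i : ℕ} (hi : i + 1 ≤ n) :
    KinvOp (n+1) (a+1) i ∘ₗ iminus n a = iminus n a ∘ₗ KinvOp n a i := by
  obtain ⟨m, rfl⟩ : ∃ m, n = m + 1 := ⟨n - 1, by omega⟩
  by_cases ha : a + 1 = m + 2
  · rw [KinvOp_hi i (by omega), KinvOp_hi i (by omega)]
    rfl
  · have hi' : ¬ i = m + 1 := by omega
    simp only [KinvOp, if_neg ha, if_neg hi']
    exact step_comp_iminus _ _

lemma KinvOp_cz {n a i : ℕ} (hi : i + 1 ≤ n) :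
    KinvOp (n+1) a i ∘ₗ izero n a = izero n a ∘ₗ KinvOp n a i := by
  obtain ⟨m, rfl⟩ : ∃ m, n = m + 1 := ⟨n - 1, by omega⟩
  rcases a with _|a
  · rw [KinvOp_bot, KinvOp_bot]; rfl
  · by_cases ha : a + 1 = m + 2
    · rw [KinvOp_hi i (by omega), KinvOp_hi i (by omega)]
      rfl
    · have hi' : ¬ i = m + 1 := by omega
      simp only [KinvOp, if_neg ha, if_neg hi']
      exact step_comp_izero _ _

lemma id_ci {n a : ℕ} :
    (LinearMap.id : Module.End A (V (n+1) (a+1))) ∘ₗ iminus n a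
      = iminus n a ∘ₗ (LinearMap.id : Module.End A (V n a)) := by simp

lemma id_cz {n a : ℕ} :
    (LinearMap.id : Module.End A (V (n+1) a)) ∘ₗ izero n a
      = izero n a ∘ₗ (LinearMap.id : Module.End A (V n a)) := by simp

/-! ### Action of the top generator on double inclusions -/

lemma XpT_mm (n a : ℕ) :
    XpOp (n+2) (a+2) (n+1) ∘ₗ (iminus (n+1) (a+1) ∘ₗ iminus n a) = 0 := by
  apply LinearMap.ext; intro v
  simp only [LinearMap.comp_apply, XpOp]
  split_ifs with h1
  · simp
  · simp [LinearMap.comp_apply, LinearMap.add_apply]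

lemma XpT_mz (n a : ℕ) :
    XpOp (n+2) (a+1) (n+1) ∘ₗ (iminus (n+1) a ∘ₗ izero n a) = 0 := by
  apply LinearMap.ext; intro v
  simp only [LinearMap.comp_apply, XpOp]
  split_ifs with h1
  · simp
  · simp [LinearMap.comp_apply, LinearMap.add_apply]

lemma XpT_zm (n a : ℕ) :
    XpOp (n+2) (a+1) (n+1) ∘ₗ (izero (n+1) (a+1) ∘ₗ iminus n a) = iminus (n+1) a ∘ₗ izero n a := by
  apply LinearMap.ext; intro v
  simp only [LinearMap.comp_apply, XpOp]
  split_ifs with h1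
  · have hv : v = 0 := funext fun s => ((BS_isEmpty (show _ < _ by omega)).false s).elim
    rw [hv]
    simp
  · simp [LinearMap.comp_apply, LinearMap.add_apply]

lemma XmT_mm (n a : ℕ) :
    XmOp (n+2) (a+2) (n+1) ∘ₗ (iminus (n+1) (a+1) ∘ₗ iminus n a) = 0 := by
  apply LinearMap.ext; intro v
  simp only [LinearMap.comp_apply, XmOp]
  split_ifs with h1
  · simp
  · simp [LinearMap.comp_apply, LinearMap.add_apply]

lemma XmT_mz (n a : ℕ) :
    XmOp (n+2) (a+1) (n+1) ∘ₗ (iminus (n+1) a ∘ₗ izero n a) = izero (n+1) (a+1) ∘ₗ iminus n a := by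
  apply LinearMap.ext; intro v
  simp only [LinearMap.comp_apply, XmOp]
  split_ifs with h1
  · have hv : v = 0 := funext fun s => ((BS_isEmpty (show _ < _ by omega)).false s).elim
    rw [hv]
    simp
  · simp [LinearMap.comp_apply, LinearMap.add_apply]

lemma XmT_zm (n a : ℕ) :
    XmOp (n+2) (a+1) (n+1) ∘ₗ (izero (n+1) (a+1) ∘ₗ iminus n a) = 0 := by
  apply LinearMap.ext; intro v
  simp only [LinearMap.comp_apply, XmOp]
  split_ifs with h1
  · simp
  · simp [LinearMap.comp_apply, LinearMap.add_apply]

lemma KT_mm (n a : ℕ) :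
    KOp (n+2) (a+2) (n+1) ∘ₗ (iminus (n+1) (a+1) ∘ₗ iminus n a) = iminus (n+1) (a+1) ∘ₗ iminus n a := by
  apply LinearMap.ext; intro v
  simp only [LinearMap.comp_apply, KOp]
  split_ifs with h1
  · rfl
  · simp [LinearMap.comp_apply, LinearMap.add_apply]

lemma KT_mz (n a : ℕ) :
    KOp (n+2) (a+1) (n+1) ∘ₗ (iminus (n+1) a ∘ₗ izero n a) = qq • (iminus (n+1) a ∘ₗ izero n a) := by
  apply LinearMap.ext; intro v
  simp only [LinearMap.comp_apply, KOp]
  split_ifs with h1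
  · have hv : v = 0 := funext fun s => ((BS_isEmpty (show _ < _ by omega)).false s).elim
    rw [hv]
    simp
  · simp [LinearMap.comp_apply, LinearMap.add_apply]

lemma KT_zm (n a : ℕ) :
    KOp (n+2) (a+1) (n+1) ∘ₗ (izero (n+1) (a+1) ∘ₗ iminus n a) = qq⁻¹ • (izero (n+1) (a+1) ∘ₗ iminus n a) := by
  apply LinearMap.ext; intro v
  simp only [LinearMap.comp_apply, KOp]
  split_ifs with h1
  · have hv : v = 0 := funext fun s => ((BS_isEmpty (show _ < _ by omega)).false s).elim
    rw [hv]
    simp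
  · simp [LinearMap.comp_apply, LinearMap.add_apply]

lemma KiT_mm (n a : ℕ) :
    KinvOp (n+2) (a+2) (n+1) ∘ₗ (iminus (n+1) (a+1) ∘ₗ iminus n a) = iminus (n+1) (a+1) ∘ₗ iminus n a := by
  apply LinearMap.ext; intro v
  simp only [LinearMap.comp_apply, KinvOp]
  split_ifs with h1
  · rfl
  · simp [LinearMap.comp_apply, LinearMap.add_apply]

lemma KiT_mz (n a : ℕ) :
    KinvOp (n+2) (a+1) (n+1) ∘ₗ (iminus (n+1) a ∘ₗ izero n a) = qq⁻¹ • (iminus (n+1) a ∘ₗ izero n a) := by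
  apply LinearMap.ext; intro v
  simp only [LinearMap.comp_apply, KinvOp]
  split_ifs with h1
  · have hv : v = 0 := funext fun s => ((BS_isEmpty (show _ < _ by omega)).false s).elim
    rw [hv]
    simp
  · simp [LinearMap.comp_apply, LinearMap.add_apply]

lemma KiT_zm (n a : ℕ) :
    KinvOp (n+2) (a+1) (n+1) ∘ₗ (izero (n+1) (a+1) ∘ₗ iminus n a) = qq • (izero (n+1) (a+1) ∘ₗ iminus n a) := by
  apply LinearMap.ext; intro v
  simp only [LinearMap.comp_apply, KinvOp]
  split_ifs with h1
  · have hv : v = 0 := funext fun s => ((BS_isEmpty (show _ < _ by omega)).false s).elim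
    rw [hv]
    simp
  · simp [LinearMap.comp_apply, LinearMap.add_apply]

lemma XpT_zz (n a : ℕ) :
    XpOp (n+2) a (n+1) ∘ₗ (izero (n+1) a ∘ₗ izero n a) = 0 := by
  rcases a with _|a
  · rw [XpOp_bot]; simp
  · apply LinearMap.ext; intro v
    simp only [LinearMap.comp_apply, XpOp]
    split_ifs with h1
    · simp
    · simp [LinearMap.comp_apply, LinearMap.add_apply]

lemma XmT_zz (n a : ℕ) :
    XmOp (n+2) a (n+1) ∘ₗ (izero (n+1) a ∘ₗ izero n a) = 0 := by
  rcases a with _|a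
  · rw [XmOp_bot]; simp
  · apply LinearMap.ext; intro v
    simp only [LinearMap.comp_apply, XmOp]
    split_ifs with h1
    · simp
    · simp [LinearMap.comp_apply, LinearMap.add_apply]

lemma KT_zz (n a : ℕ) :
    KOp (n+2) a (n+1) ∘ₗ (izero (n+1) a ∘ₗ izero n a) = izero (n+1) a ∘ₗ izero n a := by
  rcases a with _|a
  · rw [KOp_bot]; apply LinearMap.ext; intro v; rfl
  · apply LinearMap.ext; intro v
    simp only [LinearMap.comp_apply, KOp]
    split_ifs with h1
    · rfl
    · simp [LinearMap.comp_apply, LinearMap.add_apply]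

lemma KiT_zz (n a : ℕ) :
    KinvOp (n+2) a (n+1) ∘ₗ (izero (n+1) a ∘ₗ izero n a) = izero (n+1) a ∘ₗ izero n a := by
  rcases a with _|a
  · rw [KinvOp_bot]; apply LinearMap.ext; intro v; rfl
  · apply LinearMap.ext; intro v
    simp only [LinearMap.comp_apply, KinvOp]
    split_ifs with h1
    · rfl
    · simp [LinearMap.comp_apply, LinearMap.add_apply]

/-! ### Tensor product helpers -/

lemma map3_map3 {M₁ M₂ M₃ N₁ N₂ N₃ P₁ P₂ P₃ : Type}
    [AddCommMonoid M₁] [AddCommMonoid M₂] [AddCommMonoid M₃]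
    [AddCommMonoid N₁] [AddCommMonoid N₂] [AddCommMonoid N₃]
    [AddCommMonoid P₁] [AddCommMonoid P₂] [AddCommMonoid P₃]
    [Module A M₁] [Module A M₂] [Module A M₃] [Module A N₁] [Module A N₂] [Module A N₃]
    [Module A P₁] [Module A P₂] [Module A P₃]
    (f₁ : N₁ →ₗ[A] P₁) (f₂ : N₂ →ₗ[A] P₂) (f₃ : N₃ →ₗ[A] P₃)
    (g₁ : M₁ →ₗ[A] N₁) (g₂ : M₂ →ₗ[A] N₂) (g₃ : M₃ →ₗ[A] N₃)
    (x : M₁ ⊗[A] (M₂ ⊗[A] M₃)) :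
    TensorProduct.map f₁ (TensorProduct.map f₂ f₃)
      (TensorProduct.map g₁ (TensorProduct.map g₂ g₃) x)
      = TensorProduct.map (f₁ ∘ₗ g₁) (TensorProduct.map (f₂ ∘ₗ g₂) (f₃ ∘ₗ g₃)) x := by
  rw [TensorProduct.map_comp, TensorProduct.map_comp]
  rfl

@[simp] lemma vterm1_add (n a b c : ℕ) (x y : V n a ⊗[A] (V n b ⊗[A] V n c)) :
    vterm1 n a b c (x + y) = vterm1 n a b c x + vterm1 n a b c y := by
  simp [vterm1, smul_add]

@[simp] lemma vterm2_add (n a b c : ℕ) (x y : V n a ⊗[A] (V n b ⊗[A] V n c)) :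
    vterm2 n a b c (x + y) = vterm2 n a b c x + vterm2 n a b c y := by
  simp [vterm2, smul_add]

@[simp] lemma vterm3_add (n a b c : ℕ) (x y : V n a ⊗[A] (V n b ⊗[A] V n c)) :
    vterm3 n a b c (x + y) = vterm3 n a b c x + vterm3 n a b c y := by
  simp [vterm3, smul_add]

@[simp] lemma vterm1_zero (n a b c : ℕ) : vterm1 n a b c 0 = 0 := by
  simp only [vterm1, LinearMap.map_zero, smul_zero]
@[simp] lemma vterm2_zero (n a b c : ℕ) : vterm2 n a b c 0 = 0 := by
  simp only [vterm2, LinearMap.map_zero, smul_zero]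
@[simp] lemma vterm3_zero (n a b c : ℕ) : vterm3 n a b c 0 = 0 := by
  simp only [vterm3, LinearMap.map_zero, smul_zero]

lemma hqq : (qq : A) ≠ 0 := RatFunc.X_ne_zero


/-! ### Action of the top generator on the nine pieces of `voutE` -/

lemma smul_eq_neg_smul3 {n1 n2 n3 m1 m2 m3 : ℕ} {r s : A} (h : r + s = 0)
    (x : V n1 m1 ⊗[A] (V n2 m2 ⊗[A] V n3 m3)) : r • x = -(s • x) := by
  have hr : r = -s := by linear_combination h
  rw [hr]
  exact neg_smul s x

@[simp] lemma Xp_p11 (n a b c : ℕ) (w : V n a ⊗[A] (V n b ⊗[A] V n c)) :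
    t3Xp (n+2) (a+2) b c (n+1) (vterm1 (n+1) (a+1) b c (vterm1 n a b c w)) = 0 := by
  simp only [t3Xp, t3Xm, t3K, vterm1, vterm2, vterm3, LinearMap.add_apply, map_smul, map3_map3,
    LinearMap.id_comp, XpT_mm, XpT_mz, XpT_zm, XpT_zz, XmT_mm, XmT_mz, XmT_zm, XmT_zz,
    KT_mm, KT_mz, KT_zm, KT_zz, KiT_mm, KiT_mz, KiT_zm, KiT_zz,
    TensorProduct.map_smul_left, TensorProduct.map_smul_right,
    TensorProduct.map_zero_left, TensorProduct.map_zero_right,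
    LinearMap.zero_apply, LinearMap.smul_apply, smul_zero, zero_add, add_zero, smul_smul]

@[simp] lemma Xp_p12 (n a b c : ℕ) (w : V n a ⊗[A] (V n b ⊗[A] V n c)) :
    t3Xp (n+2) (a+1) (b+1) c (n+1) (vterm1 (n+1) a (b+1) c (vterm2 n a b c w)) = ((-1:A)^(a+c) * qq^(b+1+2*c)) • (TensorProduct.map (iminus (n+1) a ∘ₗ izero n a) (TensorProduct.map (iminus (n+1) b ∘ₗ izero n b) (izero (n+1) c ∘ₗ izero n c)) w) := by
  simp only [t3Xp, t3Xm, t3K, vterm1, vterm2, vterm3, LinearMap.add_apply, map_smul, map3_map3,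
    LinearMap.id_comp, XpT_mm, XpT_mz, XpT_zm, XpT_zz, XmT_mm, XmT_mz, XmT_zm, XmT_zz,
    KT_mm, KT_mz, KT_zm, KT_zz, KiT_mm, KiT_mz, KiT_zm, KiT_zz,
    TensorProduct.map_smul_left, TensorProduct.map_smul_right,
    TensorProduct.map_zero_left, TensorProduct.map_zero_right,
    LinearMap.zero_apply, LinearMap.smul_apply, smul_zero, zero_add, add_zero, smul_smul]
  congr 1
  ring

@[simp] lemma Xp_p13 (n a b c : ℕ) (w : V n a ⊗[A] (V n b ⊗[A] V n c)) :
    t3Xp (n+2) (a+1) b (c+1) (n+1) (vterm1 (n+1) a b (c+1) (vterm3 n a b c w)) = -(((-1:A)^(b+c) * qq^(b+c+1)) • (TensorProduct.map (iminus (n+1) a ∘ₗ izero n a) (TensorProduct.map (izero (n+1) b ∘ₗ izero n b) (iminus (n+1) c ∘ₗ izero n c)) w)) := by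
  simp only [t3Xp, t3Xm, t3K, vterm1, vterm2, vterm3, LinearMap.add_apply, map_smul, map3_map3,
    LinearMap.id_comp, XpT_mm, XpT_mz, XpT_zm, XpT_zz, XmT_mm, XmT_mz, XmT_zm, XmT_zz,
    KT_mm, KT_mz, KT_zm, KT_zz, KiT_mm, KiT_mz, KiT_zm, KiT_zz,
    TensorProduct.map_smul_left, TensorProduct.map_smul_right,
    TensorProduct.map_zero_left, TensorProduct.map_zero_right,
    LinearMap.zero_apply, LinearMap.smul_apply, smul_zero, zero_add, add_zero, smul_smul]
  apply smul_eq_neg_smul3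
  ring

@[simp] lemma Xp_p21 (n a b c : ℕ) (w : V n a ⊗[A] (V n b ⊗[A] V n c)) :
    t3Xp (n+2) (a+1) (b+1) c (n+1) (vterm2 (n+1) (a+1) b c (vterm1 n a b c w)) = -(((-1:A)^(a+c) * qq^(b+1+2*c)) • (TensorProduct.map (iminus (n+1) a ∘ₗ izero n a) (TensorProduct.map (iminus (n+1) b ∘ₗ izero n b) (izero (n+1) c ∘ₗ izero n c)) w)) := by
  simp only [t3Xp, t3Xm, t3K, vterm1, vterm2, vterm3, LinearMap.add_apply, map_smul, map3_map3,
    LinearMap.id_comp, XpT_mm, XpT_mz, XpT_zm, XpT_zz, XmT_mm, XmT_mz, XmT_zm, XmT_zz,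
    KT_mm, KT_mz, KT_zm, KT_zz, KiT_mm, KiT_mz, KiT_zm, KiT_zz,
    TensorProduct.map_smul_left, TensorProduct.map_smul_right,
    TensorProduct.map_zero_left, TensorProduct.map_zero_right,
    LinearMap.zero_apply, LinearMap.smul_apply, smul_zero, zero_add, add_zero, smul_smul]
  apply smul_eq_neg_smul3
  ring

@[simp] lemma Xp_p22 (n a b c : ℕ) (w : V n a ⊗[A] (V n b ⊗[A] V n c)) :
    t3Xp (n+2) a (b+2) c (n+1) (vterm2 (n+1) a (b+1) c (vterm2 n a b c w)) = 0 := by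
  simp only [t3Xp, t3Xm, t3K, vterm1, vterm2, vterm3, LinearMap.add_apply, map_smul, map3_map3,
    LinearMap.id_comp, XpT_mm, XpT_mz, XpT_zm, XpT_zz, XmT_mm, XmT_mz, XmT_zm, XmT_zz,
    KT_mm, KT_mz, KT_zm, KT_zz, KiT_mm, KiT_mz, KiT_zm, KiT_zz,
    TensorProduct.map_smul_left, TensorProduct.map_smul_right,
    TensorProduct.map_zero_left, TensorProduct.map_zero_right,
    LinearMap.zero_apply, LinearMap.smul_apply, smul_zero, zero_add, add_zero, smul_smul]

@[simp] lemma Xp_p23 (n a b c : ℕ) (w : V n a ⊗[A] (V n b ⊗[A] V n c)) :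
    t3Xp (n+2) a (b+1) (c+1) (n+1) (vterm2 (n+1) a b (c+1) (vterm3 n a b c w)) = ((-1:A)^(a+b) * qq^(c+1)) • (TensorProduct.map (izero (n+1) a ∘ₗ izero n a) (TensorProduct.map (iminus (n+1) b ∘ₗ izero n b) (iminus (n+1) c ∘ₗ izero n c)) w) := by
  simp only [t3Xp, t3Xm, t3K, vterm1, vterm2, vterm3, LinearMap.add_apply, map_smul, map3_map3,
    LinearMap.id_comp, XpT_mm, XpT_mz, XpT_zm, XpT_zz, XmT_mm, XmT_mz, XmT_zm, XmT_zz,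
    KT_mm, KT_mz, KT_zm, KT_zz, KiT_mm, KiT_mz, KiT_zm, KiT_zz,
    TensorProduct.map_smul_left, TensorProduct.map_smul_right,
    TensorProduct.map_zero_left, TensorProduct.map_zero_right,
    LinearMap.zero_apply, LinearMap.smul_apply, smul_zero, zero_add, add_zero, smul_smul]
  congr 1
  ring

@[simp] lemma Xp_p31 (n a b c : ℕ) (w : V n a ⊗[A] (V n b ⊗[A] V n c)) :
    t3Xp (n+2) (a+1) b (c+1) (n+1) (vterm3 (n+1) (a+1) b c (vterm1 n a b c w)) = ((-1:A)^(b+c) * qq^(b+c+1)) • (TensorProduct.map (iminus (n+1) a ∘ₗ izero n a) (TensorProduct.map (izero (n+1) b ∘ₗ izero n b) (iminus (n+1) c ∘ₗ izero n c)) w) := by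
  simp only [t3Xp, t3Xm, t3K, vterm1, vterm2, vterm3, LinearMap.add_apply, map_smul, map3_map3,
    LinearMap.id_comp, XpT_mm, XpT_mz, XpT_zm, XpT_zz, XmT_mm, XmT_mz, XmT_zm, XmT_zz,
    KT_mm, KT_mz, KT_zm, KT_zz, KiT_mm, KiT_mz, KiT_zm, KiT_zz,
    TensorProduct.map_smul_left, TensorProduct.map_smul_right,
    TensorProduct.map_zero_left, TensorProduct.map_zero_right,
    LinearMap.zero_apply, LinearMap.smul_apply, smul_zero, zero_add, add_zero, smul_smul]
  congr 1
  ring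

@[simp] lemma Xp_p32 (n a b c : ℕ) (w : V n a ⊗[A] (V n b ⊗[A] V n c)) :
    t3Xp (n+2) a (b+1) (c+1) (n+1) (vterm3 (n+1) a (b+1) c (vterm2 n a b c w)) = -(((-1:A)^(a+b) * qq^(c+1)) • (TensorProduct.map (izero (n+1) a ∘ₗ izero n a) (TensorProduct.map (iminus (n+1) b ∘ₗ izero n b) (iminus (n+1) c ∘ₗ izero n c)) w)) := by
  simp only [t3Xp, t3Xm, t3K, vterm1, vterm2, vterm3, LinearMap.add_apply, map_smul, map3_map3,
    LinearMap.id_comp, XpT_mm, XpT_mz, XpT_zm, XpT_zz, XmT_mm, XmT_mz, XmT_zm, XmT_zz,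
    KT_mm, KT_mz, KT_zm, KT_zz, KiT_mm, KiT_mz, KiT_zm, KiT_zz,
    TensorProduct.map_smul_left, TensorProduct.map_smul_right,
    TensorProduct.map_zero_left, TensorProduct.map_zero_right,
    LinearMap.zero_apply, LinearMap.smul_apply, smul_zero, zero_add, add_zero, smul_smul]
  apply smul_eq_neg_smul3
  ring

@[simp] lemma Xp_p33 (n a b c : ℕ) (w : V n a ⊗[A] (V n b ⊗[A] V n c)) :
    t3Xp (n+2) a b (c+2) (n+1) (vterm3 (n+1) a b (c+1) (vterm3 n a b c w)) = 0 := by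
  simp only [t3Xp, t3Xm, t3K, vterm1, vterm2, vterm3, LinearMap.add_apply, map_smul, map3_map3,
    LinearMap.id_comp, XpT_mm, XpT_mz, XpT_zm, XpT_zz, XmT_mm, XmT_mz, XmT_zm, XmT_zz,
    KT_mm, KT_mz, KT_zm, KT_zz, KiT_mm, KiT_mz, KiT_zm, KiT_zz,
    TensorProduct.map_smul_left, TensorProduct.map_smul_right,
    TensorProduct.map_zero_left, TensorProduct.map_zero_right,
    LinearMap.zero_apply, LinearMap.smul_apply, smul_zero, zero_add, add_zero, smul_smul]

@[simp] lemma Xm_p11 (n a b c : ℕ) (w : V n a ⊗[A] (V n b ⊗[A] V n c)) :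
    t3Xm (n+2) (a+2) b c (n+1) (vterm1 (n+1) (a+1) b c (vterm1 n a b c w)) = 0 := by
  simp only [t3Xp, t3Xm, t3K, vterm1, vterm2, vterm3, LinearMap.add_apply, map_smul, map3_map3,
    LinearMap.id_comp, XpT_mm, XpT_mz, XpT_zm, XpT_zz, XmT_mm, XmT_mz, XmT_zm, XmT_zz,
    KT_mm, KT_mz, KT_zm, KT_zz, KiT_mm, KiT_mz, KiT_zm, KiT_zz,
    TensorProduct.map_smul_left, TensorProduct.map_smul_right,
    TensorProduct.map_zero_left, TensorProduct.map_zero_right,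
    LinearMap.zero_apply, LinearMap.smul_apply, smul_zero, zero_add, add_zero, smul_smul]

@[simp] lemma Xm_p12 (n a b c : ℕ) (w : V n a ⊗[A] (V n b ⊗[A] V n c)) :
    t3Xm (n+2) (a+1) (b+1) c (n+1) (vterm1 (n+1) a (b+1) c (vterm2 n a b c w)) = ((-1:A)^(a+c) * qq^(b+1+2*c)) • (TensorProduct.map (izero (n+1) (a+1) ∘ₗ iminus n a) (TensorProduct.map (izero (n+1) (b+1) ∘ₗ iminus n b) (izero (n+1) c ∘ₗ izero n c)) w) := by
  simp only [t3Xp, t3Xm, t3K, vterm1, vterm2, vterm3, LinearMap.add_apply, map_smul, map3_map3,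
    LinearMap.id_comp, XpT_mm, XpT_mz, XpT_zm, XpT_zz, XmT_mm, XmT_mz, XmT_zm, XmT_zz,
    KT_mm, KT_mz, KT_zm, KT_zz, KiT_mm, KiT_mz, KiT_zm, KiT_zz,
    TensorProduct.map_smul_left, TensorProduct.map_smul_right,
    TensorProduct.map_zero_left, TensorProduct.map_zero_right,
    LinearMap.zero_apply, LinearMap.smul_apply, smul_zero, zero_add, add_zero, smul_smul]
  congr 1
  ring

@[simp] lemma Xm_p13 (n a b c : ℕ) (w : V n a ⊗[A] (V n b ⊗[A] V n c)) :
    t3Xm (n+2) (a+1) b (c+1) (n+1) (vterm1 (n+1) a b (c+1) (vterm3 n a b c w)) = -(((-1:A)^(b+c) * qq^(b+c+1)) • (TensorProduct.map (izero (n+1) (a+1) ∘ₗ iminus n a) (TensorProduct.map (izero (n+1) b ∘ₗ izero n b) (izero (n+1) (c+1) ∘ₗ iminus n c)) w)) := by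
  simp only [t3Xp, t3Xm, t3K, vterm1, vterm2, vterm3, LinearMap.add_apply, map_smul, map3_map3,
    LinearMap.id_comp, XpT_mm, XpT_mz, XpT_zm, XpT_zz, XmT_mm, XmT_mz, XmT_zm, XmT_zz,
    KT_mm, KT_mz, KT_zm, KT_zz, KiT_mm, KiT_mz, KiT_zm, KiT_zz,
    TensorProduct.map_smul_left, TensorProduct.map_smul_right,
    TensorProduct.map_zero_left, TensorProduct.map_zero_right,
    LinearMap.zero_apply, LinearMap.smul_apply, smul_zero, zero_add, add_zero, smul_smul]
  apply smul_eq_neg_smul3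
  ring

@[simp] lemma Xm_p21 (n a b c : ℕ) (w : V n a ⊗[A] (V n b ⊗[A] V n c)) :
    t3Xm (n+2) (a+1) (b+1) c (n+1) (vterm2 (n+1) (a+1) b c (vterm1 n a b c w)) = -(((-1:A)^(a+c) * qq^(b+1+2*c)) • (TensorProduct.map (izero (n+1) (a+1) ∘ₗ iminus n a) (TensorProduct.map (izero (n+1) (b+1) ∘ₗ iminus n b) (izero (n+1) c ∘ₗ izero n c)) w)) := by
  simp only [t3Xp, t3Xm, t3K, vterm1, vterm2, vterm3, LinearMap.add_apply, map_smul, map3_map3,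
    LinearMap.id_comp, XpT_mm, XpT_mz, XpT_zm, XpT_zz, XmT_mm, XmT_mz, XmT_zm, XmT_zz,
    KT_mm, KT_mz, KT_zm, KT_zz, KiT_mm, KiT_mz, KiT_zm, KiT_zz,
    TensorProduct.map_smul_left, TensorProduct.map_smul_right,
    TensorProduct.map_zero_left, TensorProduct.map_zero_right,
    LinearMap.zero_apply, LinearMap.smul_apply, smul_zero, zero_add, add_zero, smul_smul]
  apply smul_eq_neg_smul3
  ring

@[simp] lemma Xm_p22 (n a b c : ℕ) (w : V n a ⊗[A] (V n b ⊗[A] V n c)) :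
    t3Xm (n+2) a (b+2) c (n+1) (vterm2 (n+1) a (b+1) c (vterm2 n a b c w)) = 0 := by
  simp only [t3Xp, t3Xm, t3K, vterm1, vterm2, vterm3, LinearMap.add_apply, map_smul, map3_map3,
    LinearMap.id_comp, XpT_mm, XpT_mz, XpT_zm, XpT_zz, XmT_mm, XmT_mz, XmT_zm, XmT_zz,
    KT_mm, KT_mz, KT_zm, KT_zz, KiT_mm, KiT_mz, KiT_zm, KiT_zz,
    TensorProduct.map_smul_left, TensorProduct.map_smul_right,
    TensorProduct.map_zero_left, TensorProduct.map_zero_right,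
    LinearMap.zero_apply, LinearMap.smul_apply, smul_zero, zero_add, add_zero, smul_smul]

@[simp] lemma Xm_p23 (n a b c : ℕ) (w : V n a ⊗[A] (V n b ⊗[A] V n c)) :
    t3Xm (n+2) a (b+1) (c+1) (n+1) (vterm2 (n+1) a b (c+1) (vterm3 n a b c w)) = ((-1:A)^(a+b) * qq^(c+1)) • (TensorProduct.map (izero (n+1) a ∘ₗ izero n a) (TensorProduct.map (izero (n+1) (b+1) ∘ₗ iminus n b) (izero (n+1) (c+1) ∘ₗ iminus n c)) w) := by
  simp only [t3Xp, t3Xm, t3K, vterm1, vterm2, vterm3, LinearMap.add_apply, map_smul, map3_map3,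
    LinearMap.id_comp, XpT_mm, XpT_mz, XpT_zm, XpT_zz, XmT_mm, XmT_mz, XmT_zm, XmT_zz,
    KT_mm, KT_mz, KT_zm, KT_zz, KiT_mm, KiT_mz, KiT_zm, KiT_zz,
    TensorProduct.map_smul_left, TensorProduct.map_smul_right,
    TensorProduct.map_zero_left, TensorProduct.map_zero_right,
    LinearMap.zero_apply, LinearMap.smul_apply, smul_zero, zero_add, add_zero, smul_smul]
  congr 1
  ring

@[simp] lemma Xm_p31 (n a b c : ℕ) (w : V n a ⊗[A] (V n b ⊗[A] V n c)) :
    t3Xm (n+2) (a+1) b (c+1) (n+1) (vterm3 (n+1) (a+1) b c (vterm1 n a b c w)) = ((-1:A)^(b+c) * qq^(b+c+1)) • (TensorProduct.map (izero (n+1) (a+1) ∘ₗ iminus n a) (TensorProduct.map (izero (n+1) b ∘ₗ izero n b) (izero (n+1) (c+1) ∘ₗ iminus n c)) w) := by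
  simp only [t3Xp, t3Xm, t3K, vterm1, vterm2, vterm3, LinearMap.add_apply, map_smul, map3_map3,
    LinearMap.id_comp, XpT_mm, XpT_mz, XpT_zm, XpT_zz, XmT_mm, XmT_mz, XmT_zm, XmT_zz,
    KT_mm, KT_mz, KT_zm, KT_zz, KiT_mm, KiT_mz, KiT_zm, KiT_zz,
    TensorProduct.map_smul_left, TensorProduct.map_smul_right,
    TensorProduct.map_zero_left, TensorProduct.map_zero_right,
    LinearMap.zero_apply, LinearMap.smul_apply, smul_zero, zero_add, add_zero, smul_smul]
  congr 1
  ring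

@[simp] lemma Xm_p32 (n a b c : ℕ) (w : V n a ⊗[A] (V n b ⊗[A] V n c)) :
    t3Xm (n+2) a (b+1) (c+1) (n+1) (vterm3 (n+1) a (b+1) c (vterm2 n a b c w)) = -(((-1:A)^(a+b) * qq^(c+1)) • (TensorProduct.map (izero (n+1) a ∘ₗ izero n a) (TensorProduct.map (izero (n+1) (b+1) ∘ₗ iminus n b) (izero (n+1) (c+1) ∘ₗ iminus n c)) w)) := by
  simp only [t3Xp, t3Xm, t3K, vterm1, vterm2, vterm3, LinearMap.add_apply, map_smul, map3_map3,
    LinearMap.id_comp, XpT_mm, XpT_mz, XpT_zm, XpT_zz, XmT_mm, XmT_mz, XmT_zm, XmT_zz,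
    KT_mm, KT_mz, KT_zm, KT_zz, KiT_mm, KiT_mz, KiT_zm, KiT_zz,
    TensorProduct.map_smul_left, TensorProduct.map_smul_right,
    TensorProduct.map_zero_left, TensorProduct.map_zero_right,
    LinearMap.zero_apply, LinearMap.smul_apply, smul_zero, zero_add, add_zero, smul_smul]
  apply smul_eq_neg_smul3
  ring

@[simp] lemma Xm_p33 (n a b c : ℕ) (w : V n a ⊗[A] (V n b ⊗[A] V n c)) :
    t3Xm (n+2) a b (c+2) (n+1) (vterm3 (n+1) a b (c+1) (vterm3 n a b c w)) = 0 := by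
  simp only [t3Xp, t3Xm, t3K, vterm1, vterm2, vterm3, LinearMap.add_apply, map_smul, map3_map3,
    LinearMap.id_comp, XpT_mm, XpT_mz, XpT_zm, XpT_zz, XmT_mm, XmT_mz, XmT_zm, XmT_zz,
    KT_mm, KT_mz, KT_zm, KT_zz, KiT_mm, KiT_mz, KiT_zm, KiT_zz,
    TensorProduct.map_smul_left, TensorProduct.map_smul_right,
    TensorProduct.map_zero_left, TensorProduct.map_zero_right,
    LinearMap.zero_apply, LinearMap.smul_apply, smul_zero, zero_add, add_zero, smul_smul]

@[simp] lemma K_p11 (n a b c : ℕ) (w : V n a ⊗[A] (V n b ⊗[A] V n c)) :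
    t3K (n+2) (a+2) b c (n+1) (vterm1 (n+1) (a+1) b c (vterm1 n a b c w)) = vterm1 (n+1) (a+1) b c (vterm1 n a b c w) := by
  simp only [t3Xp, t3Xm, t3K, vterm1, vterm2, vterm3, LinearMap.add_apply, map_smul, map3_map3,
    LinearMap.id_comp, XpT_mm, XpT_mz, XpT_zm, XpT_zz, XmT_mm, XmT_mz, XmT_zm, XmT_zz,
    KT_mm, KT_mz, KT_zm, KT_zz, KiT_mm, KiT_mz, KiT_zm, KiT_zz,
    TensorProduct.map_smul_left, TensorProduct.map_smul_right,
    TensorProduct.map_zero_left, TensorProduct.map_zero_right,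
    LinearMap.zero_apply, LinearMap.smul_apply, smul_zero, zero_add, add_zero, smul_smul]

@[simp] lemma K_p12 (n a b c : ℕ) (w : V n a ⊗[A] (V n b ⊗[A] V n c)) :
    t3K (n+2) (a+1) (b+1) c (n+1) (vterm1 (n+1) a (b+1) c (vterm2 n a b c w)) = vterm1 (n+1) a (b+1) c (vterm2 n a b c w) := by
  simp only [t3Xp, t3Xm, t3K, vterm1, vterm2, vterm3, LinearMap.add_apply, map_smul, map3_map3,
    LinearMap.id_comp, XpT_mm, XpT_mz, XpT_zm, XpT_zz, XmT_mm, XmT_mz, XmT_zm, XmT_zz,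
    KT_mm, KT_mz, KT_zm, KT_zz, KiT_mm, KiT_mz, KiT_zm, KiT_zz,
    TensorProduct.map_smul_left, TensorProduct.map_smul_right,
    TensorProduct.map_zero_left, TensorProduct.map_zero_right,
    LinearMap.zero_apply, LinearMap.smul_apply, smul_zero, zero_add, add_zero, smul_smul]
  simp only [inv_mul_cancel₀ hqq, mul_inv_cancel₀ hqq, mul_one]

@[simp] lemma K_p13 (n a b c : ℕ) (w : V n a ⊗[A] (V n b ⊗[A] V n c)) :
    t3K (n+2) (a+1) b (c+1) (n+1) (vterm1 (n+1) a b (c+1) (vterm3 n a b c w)) = vterm1 (n+1) a b (c+1) (vterm3 n a b c w) := by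
  simp only [t3Xp, t3Xm, t3K, vterm1, vterm2, vterm3, LinearMap.add_apply, map_smul, map3_map3,
    LinearMap.id_comp, XpT_mm, XpT_mz, XpT_zm, XpT_zz, XmT_mm, XmT_mz, XmT_zm, XmT_zz,
    KT_mm, KT_mz, KT_zm, KT_zz, KiT_mm, KiT_mz, KiT_zm, KiT_zz,
    TensorProduct.map_smul_left, TensorProduct.map_smul_right,
    TensorProduct.map_zero_left, TensorProduct.map_zero_right,
    LinearMap.zero_apply, LinearMap.smul_apply, smul_zero, zero_add, add_zero, smul_smul]
  simp only [inv_mul_cancel₀ hqq, mul_inv_cancel₀ hqq, mul_one]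

@[simp] lemma K_p21 (n a b c : ℕ) (w : V n a ⊗[A] (V n b ⊗[A] V n c)) :
    t3K (n+2) (a+1) (b+1) c (n+1) (vterm2 (n+1) (a+1) b c (vterm1 n a b c w)) = vterm2 (n+1) (a+1) b c (vterm1 n a b c w) := by
  simp only [t3Xp, t3Xm, t3K, vterm1, vterm2, vterm3, LinearMap.add_apply, map_smul, map3_map3,
    LinearMap.id_comp, XpT_mm, XpT_mz, XpT_zm, XpT_zz, XmT_mm, XmT_mz, XmT_zm, XmT_zz,
    KT_mm, KT_mz, KT_zm, KT_zz, KiT_mm, KiT_mz, KiT_zm, KiT_zz,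
    TensorProduct.map_smul_left, TensorProduct.map_smul_right,
    TensorProduct.map_zero_left, TensorProduct.map_zero_right,
    LinearMap.zero_apply, LinearMap.smul_apply, smul_zero, zero_add, add_zero, smul_smul]
  simp only [inv_mul_cancel₀ hqq, mul_inv_cancel₀ hqq, mul_one]

@[simp] lemma K_p22 (n a b c : ℕ) (w : V n a ⊗[A] (V n b ⊗[A] V n c)) :
    t3K (n+2) a (b+2) c (n+1) (vterm2 (n+1) a (b+1) c (vterm2 n a b c w)) = vterm2 (n+1) a (b+1) c (vterm2 n a b c w) := by
  simp only [t3Xp, t3Xm, t3K, vterm1, vterm2, vterm3, LinearMap.add_apply, map_smul, map3_map3,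
    LinearMap.id_comp, XpT_mm, XpT_mz, XpT_zm, XpT_zz, XmT_mm, XmT_mz, XmT_zm, XmT_zz,
    KT_mm, KT_mz, KT_zm, KT_zz, KiT_mm, KiT_mz, KiT_zm, KiT_zz,
    TensorProduct.map_smul_left, TensorProduct.map_smul_right,
    TensorProduct.map_zero_left, TensorProduct.map_zero_right,
    LinearMap.zero_apply, LinearMap.smul_apply, smul_zero, zero_add, add_zero, smul_smul]

@[simp] lemma K_p23 (n a b c : ℕ) (w : V n a ⊗[A] (V n b ⊗[A] V n c)) :
    t3K (n+2) a (b+1) (c+1) (n+1) (vterm2 (n+1) a b (c+1) (vterm3 n a b c w)) = vterm2 (n+1) a b (c+1) (vterm3 n a b c w) := by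
  simp only [t3Xp, t3Xm, t3K, vterm1, vterm2, vterm3, LinearMap.add_apply, map_smul, map3_map3,
    LinearMap.id_comp, XpT_mm, XpT_mz, XpT_zm, XpT_zz, XmT_mm, XmT_mz, XmT_zm, XmT_zz,
    KT_mm, KT_mz, KT_zm, KT_zz, KiT_mm, KiT_mz, KiT_zm, KiT_zz,
    TensorProduct.map_smul_left, TensorProduct.map_smul_right,
    TensorProduct.map_zero_left, TensorProduct.map_zero_right,
    LinearMap.zero_apply, LinearMap.smul_apply, smul_zero, zero_add, add_zero, smul_smul]
  simp only [inv_mul_cancel₀ hqq, mul_inv_cancel₀ hqq, mul_one]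

@[simp] lemma K_p31 (n a b c : ℕ) (w : V n a ⊗[A] (V n b ⊗[A] V n c)) :
    t3K (n+2) (a+1) b (c+1) (n+1) (vterm3 (n+1) (a+1) b c (vterm1 n a b c w)) = vterm3 (n+1) (a+1) b c (vterm1 n a b c w) := by
  simp only [t3Xp, t3Xm, t3K, vterm1, vterm2, vterm3, LinearMap.add_apply, map_smul, map3_map3,
    LinearMap.id_comp, XpT_mm, XpT_mz, XpT_zm, XpT_zz, XmT_mm, XmT_mz, XmT_zm, XmT_zz,
    KT_mm, KT_mz, KT_zm, KT_zz, KiT_mm, KiT_mz, KiT_zm, KiT_zz,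
    TensorProduct.map_smul_left, TensorProduct.map_smul_right,
    TensorProduct.map_zero_left, TensorProduct.map_zero_right,
    LinearMap.zero_apply, LinearMap.smul_apply, smul_zero, zero_add, add_zero, smul_smul]
  simp only [inv_mul_cancel₀ hqq, mul_inv_cancel₀ hqq, mul_one]

@[simp] lemma K_p32 (n a b c : ℕ) (w : V n a ⊗[A] (V n b ⊗[A] V n c)) :
    t3K (n+2) a (b+1) (c+1) (n+1) (vterm3 (n+1) a (b+1) c (vterm2 n a b c w)) = vterm3 (n+1) a (b+1) c (vterm2 n a b c w) := by
  simp only [t3Xp, t3Xm, t3K, vterm1, vterm2, vterm3, LinearMap.add_apply, map_smul, map3_map3,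
    LinearMap.id_comp, XpT_mm, XpT_mz, XpT_zm, XpT_zz, XmT_mm, XmT_mz, XmT_zm, XmT_zz,
    KT_mm, KT_mz, KT_zm, KT_zz, KiT_mm, KiT_mz, KiT_zm, KiT_zz,
    TensorProduct.map_smul_left, TensorProduct.map_smul_right,
    TensorProduct.map_zero_left, TensorProduct.map_zero_right,
    LinearMap.zero_apply, LinearMap.smul_apply, smul_zero, zero_add, add_zero, smul_smul]
  simp only [inv_mul_cancel₀ hqq, mul_inv_cancel₀ hqq, mul_one]

@[simp] lemma K_p33 (n a b c : ℕ) (w : V n a ⊗[A] (V n b ⊗[A] V n c)) :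
    t3K (n+2) a b (c+2) (n+1) (vterm3 (n+1) a b (c+1) (vterm3 n a b c w)) = vterm3 (n+1) a b (c+1) (vterm3 n a b c w) := by
  simp only [t3Xp, t3Xm, t3K, vterm1, vterm2, vterm3, LinearMap.add_apply, map_smul, map3_map3,
    LinearMap.id_comp, XpT_mm, XpT_mz, XpT_zm, XpT_zz, XmT_mm, XmT_mz, XmT_zm, XmT_zz,
    KT_mm, KT_mz, KT_zm, KT_zz, KiT_mm, KiT_mz, KiT_zm, KiT_zz,
    TensorProduct.map_smul_left, TensorProduct.map_smul_right,
    TensorProduct.map_zero_left, TensorProduct.map_zero_right,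
    LinearMap.zero_apply, LinearMap.smul_apply, smul_zero, zero_add, add_zero, smul_smul]

/-! ### Commutation of the non-top triple operators with the `vterm`s -/

lemma t3Xp_vt1 {n a b c i : ℕ} (hi : i + 1 ≤ n) (v : V n a ⊗[A] (V n b ⊗[A] V n c)) :
    t3Xp (n+1) (a+1) b c i (vterm1 n a b c v) = vterm1 n a b c (t3Xp n a b c i v) := by
  simp only [t3Xp, vterm1, LinearMap.add_apply, map_add, map_smul, smul_add, map3_map3,
    XpOp_ci hi, XpOp_cz hi, KOp_ci hi, KOp_cz hi, LinearMap.id_comp, LinearMap.comp_id]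

lemma t3Xp_vt2 {n a b c i : ℕ} (hi : i + 1 ≤ n) (v : V n a ⊗[A] (V n b ⊗[A] V n c)) :
    t3Xp (n+1) a (b+1) c i (vterm2 n a b c v) = vterm2 n a b c (t3Xp n a b c i v) := by
  simp only [t3Xp, vterm2, LinearMap.add_apply, map_add, map_smul, smul_add, map3_map3,
    XpOp_ci hi, XpOp_cz hi, KOp_ci hi, KOp_cz hi, LinearMap.id_comp, LinearMap.comp_id]

lemma t3Xp_vt3 {n a b c i : ℕ} (hi : i + 1 ≤ n) (v : V n a ⊗[A] (V n b ⊗[A] V n c)) :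
    t3Xp (n+1) a b (c+1) i (vterm3 n a b c v) = vterm3 n a b c (t3Xp n a b c i v) := by
  simp only [t3Xp, vterm3, LinearMap.add_apply, map_add, map_smul, smul_add, map3_map3,
    XpOp_ci hi, XpOp_cz hi, KOp_ci hi, KOp_cz hi, LinearMap.id_comp, LinearMap.comp_id]

lemma t3Xm_vt1 {n a b c i : ℕ} (hi : i + 1 ≤ n) (v : V n a ⊗[A] (V n b ⊗[A] V n c)) :
    t3Xm (n+1) (a+1) b c i (vterm1 n a b c v) = vterm1 n a b c (t3Xm n a b c i v) := by
  simp only [t3Xm, vterm1, LinearMap.add_apply, map_add, map_smul, smul_add, map3_map3,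
    XmOp_ci hi, XmOp_cz hi, KinvOp_ci hi, KinvOp_cz hi, LinearMap.id_comp, LinearMap.comp_id]

lemma t3Xm_vt2 {n a b c i : ℕ} (hi : i + 1 ≤ n) (v : V n a ⊗[A] (V n b ⊗[A] V n c)) :
    t3Xm (n+1) a (b+1) c i (vterm2 n a b c v) = vterm2 n a b c (t3Xm n a b c i v) := by
  simp only [t3Xm, vterm2, LinearMap.add_apply, map_add, map_smul, smul_add, map3_map3,
    XmOp_ci hi, XmOp_cz hi, KinvOp_ci hi, KinvOp_cz hi, LinearMap.id_comp, LinearMap.comp_id]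

lemma t3Xm_vt3 {n a b c i : ℕ} (hi : i + 1 ≤ n) (v : V n a ⊗[A] (V n b ⊗[A] V n c)) :
    t3Xm (n+1) a b (c+1) i (vterm3 n a b c v) = vterm3 n a b c (t3Xm n a b c i v) := by
  simp only [t3Xm, vterm3, LinearMap.add_apply, map_add, map_smul, smul_add, map3_map3,
    XmOp_ci hi, XmOp_cz hi, KinvOp_ci hi, KinvOp_cz hi, LinearMap.id_comp, LinearMap.comp_id]

lemma t3K_vt1 {n a b c i : ℕ} (hi : i + 1 ≤ n) (v : V n a ⊗[A] (V n b ⊗[A] V n c)) :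
    t3K (n+1) (a+1) b c i (vterm1 n a b c v) = vterm1 n a b c (t3K n a b c i v) := by
  simp only [t3K, vterm1, map_smul, map3_map3, KOp_ci hi, KOp_cz hi]

lemma t3K_vt2 {n a b c i : ℕ} (hi : i + 1 ≤ n) (v : V n a ⊗[A] (V n b ⊗[A] V n c)) :
    t3K (n+1) a (b+1) c i (vterm2 n a b c v) = vterm2 n a b c (t3K n a b c i v) := by
  simp only [t3K, vterm2, map_smul, map3_map3, KOp_ci hi, KOp_cz hi]

lemma t3K_vt3 {n a b c i : ℕ} (hi : i + 1 ≤ n) (v : V n a ⊗[A] (V n b ⊗[A] V n c)) :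
    t3K (n+1) a b (c+1) i (vterm3 n a b c v) = vterm3 n a b c (t3K n a b c i v) := by
  simp only [t3K, vterm3, map_smul, map3_map3, KOp_ci hi, KOp_cz hi]

/-! ### The inductive (non-top) step -/

lemma nontop_Xp {n i : ℕ} (hi : i + 1 ≤ n)
    (H : ∀ a b c : ℕ, a + b + c = n → t3Xp n a b c i (voutE n a b c) = 0) :
    ∀ a b c : ℕ, a + b + c = n + 1 → t3Xp (n+1) a b c i (voutE (n+1) a b c) = 0 := by
  intro a b c h
  rcases a with _|a <;> rcases b with _|b <;> rcases c with _|c <;>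
    simp (disch := omega) only [voutE, LinearMap.map_add, LinearMap.map_zero,
      t3Xp_vt1 hi, t3Xp_vt2 hi, t3Xp_vt3 hi, H,
      vterm1_zero, vterm2_zero, vterm3_zero, add_zero, zero_add]

lemma nontop_Xm {n i : ℕ} (hi : i + 1 ≤ n)
    (H : ∀ a b c : ℕ, a + b + c = n → t3Xm n a b c i (voutE n a b c) = 0) :
    ∀ a b c : ℕ, a + b + c = n + 1 → t3Xm (n+1) a b c i (voutE (n+1) a b c) = 0 := by
  intro a b c h
  rcases a with _|a <;> rcases b with _|b <;> rcases c with _|c <;>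
    simp (disch := omega) only [voutE, LinearMap.map_add, LinearMap.map_zero,
      t3Xm_vt1 hi, t3Xm_vt2 hi, t3Xm_vt3 hi, H,
      vterm1_zero, vterm2_zero, vterm3_zero, add_zero, zero_add]

lemma nontop_K {n i : ℕ} (hi : i + 1 ≤ n)
    (H : ∀ a b c : ℕ, a + b + c = n → t3K n a b c i (voutE n a b c) = voutE n a b c) :
    ∀ a b c : ℕ, a + b + c = n + 1 → t3K (n+1) a b c i (voutE (n+1) a b c) = voutE (n+1) a b c := by
  intro a b c h
  rcases a with _|a <;> rcases b with _|b <;> rcases c with _|c <;>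
    simp (disch := omega) only [voutE, LinearMap.map_add, LinearMap.map_zero,
      t3K_vt1 hi, t3K_vt2 hi, t3K_vt3 hi, H,
      vterm1_zero, vterm2_zero, vterm3_zero, add_zero, zero_add]

/-! ### The top generator case -/

lemma top_Xp (n : ℕ) : ∀ a b c : ℕ, a + b + c = n + 2 →
    t3Xp (n+2) a b c (n+1) (voutE (n+2) a b c) = 0 := by
  intro a b c _
  rcases a with _|_|a <;> rcases b with _|_|b <;> rcases c with _|_|c <;>
    simp only [voutE, vterm1_add, vterm2_add, vterm3_add,
      vterm1_zero, vterm2_zero, vterm3_zero, LinearMap.map_add, LinearMap.map_zero,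
      Xp_p11, Xp_p12, Xp_p13, Xp_p21, Xp_p22, Xp_p23, Xp_p31, Xp_p32, Xp_p33,
      add_zero, zero_add, add_neg_cancel, neg_add_cancel] <;>
    abel

lemma top_Xm (n : ℕ) : ∀ a b c : ℕ, a + b + c = n + 2 →
    t3Xm (n+2) a b c (n+1) (voutE (n+2) a b c) = 0 := by
  intro a b c _
  rcases a with _|_|a <;> rcases b with _|_|b <;> rcases c with _|_|c <;>
    simp only [voutE, vterm1_add, vterm2_add, vterm3_add,
      vterm1_zero, vterm2_zero, vterm3_zero, LinearMap.map_add, LinearMap.map_zero,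
      Xm_p11, Xm_p12, Xm_p13, Xm_p21, Xm_p22, Xm_p23, Xm_p31, Xm_p32, Xm_p33,
      add_zero, zero_add, add_neg_cancel, neg_add_cancel] <;>
    abel

lemma top_K (n : ℕ) : ∀ a b c : ℕ, a + b + c = n + 2 →
    t3K (n+2) a b c (n+1) (voutE (n+2) a b c) = voutE (n+2) a b c := by
  intro a b c _
  rcases a with _|_|a <;> rcases b with _|_|b <;> rcases c with _|_|c <;>
    simp only [voutE, vterm1_add, vterm2_add, vterm3_add,
      vterm1_zero, vterm2_zero, vterm3_zero, LinearMap.map_add, LinearMap.map_zero,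
      K_p11, K_p12, K_p13, K_p21, K_p22, K_p23, K_p31, K_p32, K_p33,
      add_zero, zero_add]

lemma mainAll : ∀ n a b c : ℕ, a + b + c = n → ∀ i, 1 ≤ i → i ≤ n - 1 →
    t3Xp n a b c i (voutE n a b c) = 0 ∧
    t3Xm n a b c i (voutE n a b c) = 0 ∧
    t3K n a b c i (voutE n a b c) = voutE n a b c := by
  intro n
  induction n using Nat.strong_induction_on with
  | _ n ih =>
    intro a b c habc i hi1 hi2
    obtain ⟨m, rfl⟩ : ∃ m, n = m + 2 := by
      rcases n with _|_|m
      · omega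
      · omega
      · exact ⟨m, rfl⟩
    by_cases htop : i = m + 1
    · subst htop
      exact ⟨top_Xp m a b c habc, top_Xm m a b c habc, top_K m a b c habc⟩
    · have hi : i + 1 ≤ m + 1 := by omega
      refine ⟨nontop_Xp hi (fun a' b' c' h' => (ih (m+1) (by omega) a' b' c' h' i hi1 (by omega)).1) a b c habc,
        nontop_Xm hi (fun a' b' c' h' => (ih (m+1) (by omega) a' b' c' h' i hi1 (by omega)).2.1) a b c habc,
        nontop_K hi (fun a' b' c' h' => (ih (m+1) (by omega) a' b' c' h' i hi1 (by omega)).2.2) a b c habc⟩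


/-- for `a + b + c = n`, the vector `v_out^n_{a,b,c} ∈ V_a^n ⊗ V_b^n ⊗ V_c^n`
is `U_q(sl_n)`-invariant: `Δ⁽²⁾(X_i^±)` kills it and `Δ⁽²⁾(K_i)` fixes it, for every
`i = 1, …, n-1`; equivalently, the map `𝔸 → V_a^n ⊗ V_b^n ⊗ V_c^n`, `1 ↦ v_out^n_{a,b,c}`,
is a map of `U_q(sl_n)`-modules. -/
theorem statement12 (n a b c : ℕ) (habc : a + b + c = n) :
    ∀ i, 1 ≤ i → i ≤ n - 1 →
      t3Xp n a b c i (voutE n a b c) = 0 ∧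
      t3Xm n a b c i (voutE n a b c) = 0 ∧
      t3K n a b c i (voutE n a b c) = voutE n a b c :=
  mainAll n a b c habc

end
end
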